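/- arXiv:1705.01609 — 4 statements merged into one kernel-verified Lean document; each statement's English description precedes it below -/
import Mathlib

section
/- Let K be a field of characteristic p with a p-basis a_1, ..., a_r over a perfect field k, and let E ⊆ K be an intermediate field such that a_1, ..., a_m (m ≤ r) form a p-basis of E over k. Then for every n ≥ 0 the natural map Ω^n_E → Ω^n_K induced by inclusion is injective. -/
set_option synthInstance.maxHeartbeats 400000
set_option maxHeartbeats 800000

/-- The additive subgroup of `n`-forms `b·dc₁ ∧ ⋯ ∧ dc_n` inside the exterior algebra of the
absolute Kähler differentials of a field `F`. -/
noncomputable def nForms (F : Type) [Field F] (n : ℕ) :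
    AddSubgroup (ExteriorAlgebra F (KaehlerDifferential ℤ F)) :=
  AddSubgroup.closure
    {x | ∃ (b : F) (c : Fin n → F),
      x = b • ExteriorAlgebra.ιMulti F n fun i => KaehlerDifferential.D ℤ F (c i)}


open Finset in
theorem exists_dual_derivations (p : ℕ) [Fact p.Prime] (K : Type) [Field K] [CharP K p]
    (k : Subfield K) [PerfectField ↥k] (r : ℕ) (a : Fin r → K)
    (hbasisK : Subfield.closure ((k : Set K) ∪ Set.range (frobenius K p) ∪ Set.range a) = ⊤)
    (hdimK : Module.finrank ↥(frobenius K p).fieldRange K = p ^ r) (j : Fin r) :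
    ∃ D : Derivation ℤ K K, ∀ i, D (a i) = if i = j then 1 else 0 := by
  have hp : p.Prime := Fact.out
  set F := (frobenius K p).fieldRange with hF
  set μ : (Fin r → Fin p) → K := fun α => ∏ i, a i ^ (α i : ℕ) with hμ
  have hsmul : ∀ (c : F) (x : K), c • x = (c : K) * x := fun c x => rfl
  have memF : ∀ q : Fin r → ℕ, (∏ i, a i ^ (p * q i)) ∈ F := by
    intro q
    refine ⟨∏ i, a i ^ q i, ?_⟩
    rw [map_prod]
    exact prod_congr rfl fun i _ => by rw [frobenius_def, ← pow_mul, mul_comm]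
  have hprodsplit : ∀ nn : Fin r → ℕ,
      (∏ i, a i ^ nn i) = (∏ i, a i ^ (p * (nn i / p))) * ∏ i, a i ^ (nn i % p) := by
    intro nn
    rw [← prod_mul_distrib]
    refine prod_congr rfl fun i _ => ?_
    rw [← pow_add]
    congr 1
    rw [Nat.mul_comm p _, Nat.div_add_mod']
  set A := Submodule.span F (Set.range μ) with hA
  have hone : (1 : K) ∈ A := by
    refine Submodule.subset_span ⟨fun _ => 0, ?_⟩
    simp [hμ]
  have hmulmem : ∀ (x y : K), x ∈ A → y ∈ A → x * y ∈ A := by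
    have h2 : A * A ≤ A := by
      rw [hA, Submodule.span_mul_span, Submodule.span_le]
      rintro z ⟨x, ⟨α, rfl⟩, y, ⟨β, rfl⟩, rfl⟩
      show μ α * μ β ∈ A
      have : μ α * μ β = (⟨_, memF (fun i => ((α i : ℕ) + (β i : ℕ)) / p)⟩ : F) •
          μ (fun i => ⟨((α i : ℕ) + (β i : ℕ)) % p, Nat.mod_lt _ hp.pos⟩) := by
        rw [hsmul]
        rw [hμ]
        simp only
        rw [← prod_mul_distrib, ← prod_mul_distrib]
        refine prod_congr rfl fun i _ => ?_
        rw [← pow_add, ← pow_add]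
        congr 1
        rw [Nat.mul_comm p _, Nat.div_add_mod']
      rw [this]
      exact A.smul_mem _ (Submodule.subset_span ⟨_, rfl⟩)
    intro x y hx hy
    exact h2 (Submodule.mul_mem_mul hx hy)
  set S : Subalgebra F K := A.toSubalgebra hone hmulmem with hS
  have hFD : FiniteDimensional F K := by
    apply FiniteDimensional.of_finrank_pos; rw [hdimK]
    exact pow_pos hp.pos r
  set Sf : Subfield K :=
    { carrier := (A : Set K)
      mul_mem' := fun hx hy => hmulmem _ _ hx hy
      one_mem' := hone
      add_mem' := fun hx hy => A.add_mem hx hy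
      zero_mem' := A.zero_mem
      neg_mem' := fun hx => A.neg_mem hx
      inv_mem' := fun x hx =>
        S.inv_mem_of_algebraic (x := ⟨x, hx⟩) (Algebra.IsAlgebraic.isAlgebraic _) } with hSf
  have hkF : ∀ x ∈ k, x ∈ F := by
    intro x hx
    obtain ⟨y, hy⟩ := surjective_frobenius ↥k p ⟨x, hx⟩
    exact ⟨(y : K), by rw [frobenius_def]; exact_mod_cast congrArg (Subfield.subtype k) hy⟩
  have hFS : ∀ x ∈ F, x ∈ A := by
    intro x hx
    exact S.algebraMap_mem ⟨x, hx⟩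
  have hspan : A = ⊤ := by
    have hle : Subfield.closure ((k : Set K) ∪ Set.range (frobenius K p) ∪ Set.range a) ≤ Sf := by
      rw [Subfield.closure_le]
      rintro x ((hx | ⟨y, rfl⟩) | ⟨i, rfl⟩)
      · exact hFS _ (hkF _ hx)
      · exact hFS _ ⟨y, rfl⟩
      · refine Submodule.subset_span ⟨Pi.single i ⟨1, hp.one_lt⟩, ?_⟩
        rw [hμ]
        simp only
        rw [Finset.prod_eq_single i ?_ ?_]
        · simp
        · intro l _ hl
          rw [Pi.single_eq_of_ne hl]
          simp
        · simp
    rw [hbasisK] at hle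
    exact Submodule.eq_top_iff'.2 fun x => hle (Subfield.mem_top x)
  have hcard : Fintype.card (Fin r → Fin p) = Module.finrank F K := by
    rw [hdimK]; simp
  set B : Module.Basis (Fin r → Fin p) F K :=
    basisOfTopLeSpanOfCardEqFinrank μ hspan.ge hcard with hB
  have hBμ : ∀ α, B α = μ α := fun α =>
    congrFun (coe_basisOfTopLeSpanOfCardEqFinrank μ _ _) α
  classical
  set dval : (Fin r → ℕ) → K := fun nn =>
    (nn j : K) * ∏ i, a i ^ (nn i - (if i = j then 1 else 0)) with hdval
  set Dlin : K →ₗ[F] K := B.constr ℕ (fun α => dval (fun i => (α i : ℕ))) with hDlin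
  have keyL : ∀ nn : Fin r → ℕ, Dlin (∏ i, a i ^ nn i) = dval nn := by
    intro nn
    set s : Fin r → Fin p := fun i => ⟨nn i % p, Nat.mod_lt _ hp.pos⟩ with hs
    have h1 : (∏ i, a i ^ nn i) = (⟨∏ i, a i ^ (p * (nn i / p)), memF _⟩ : F) • μ s := by
      rw [hsmul]
      exact hprodsplit nn
    have h2 : Dlin (μ s) = dval (fun i => (s i : ℕ)) := by
      rw [← hBμ, hDlin]
      exact B.constr_basis ℕ _ s
    rw [h1, map_smul, h2, hsmul]
    by_cases hj0 : nn j % p = 0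
    · have hc2 : ((nn j : ℕ) : K) = 0 := by
        have hnj := Nat.div_add_mod (nn j) p
        rw [hj0, Nat.add_zero] at hnj
        rw [← hnj]
        push_cast
        rw [CharP.cast_eq_zero K p]
        ring
      rw [hdval]
      simp only [hs, hj0, hc2]
      simp
    · have hge : 1 ≤ nn j % p := Nat.pos_of_ne_zero hj0
      have hcast : ((nn j % p : ℕ) : K) = ((nn j : ℕ) : K) := by
        conv_rhs => rw [show nn j = p * (nn j / p) + nn j % p from (Nat.div_add_mod _ _).symm]
        push_cast
        rw [CharP.cast_eq_zero K p]
        ring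
      have hprod : (∏ i, a i ^ (nn i - if i = j then 1 else 0)) =
          (∏ i, a i ^ (p * (nn i / p))) * ∏ i, a i ^ (nn i % p - if i = j then 1 else 0) := by
        rw [← Finset.prod_mul_distrib]
        refine Finset.prod_congr rfl fun i _ => ?_
        rw [← pow_add]
        congr 1
        have hd := Nat.div_add_mod (nn i) p
        set t := p * (nn i / p) with ht
        by_cases hij : i = j
        · rw [if_pos hij]
          have hgei : 1 ≤ nn i % p := by rw [hij]; exact hge
          omega
        · rw [if_neg hij]
          omega
      rw [hdval]
      simp only [hs]
      rw [hcast, hprod]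
      ring
  have hH : ∀ nn mm : Fin r → ℕ, (∏ i, a i ^ nn i) * dval mm =
      (mm j : K) * ∏ i, a i ^ ((nn i + mm i) - if i = j then 1 else 0) := by
    intro nn mm
    by_cases h0 : mm j = 0
    · rw [hdval]
      simp only [h0]
      simp
    · have hge : 1 ≤ mm j := Nat.pos_of_ne_zero h0
      rw [hdval]
      simp only
      rw [← mul_assoc, mul_comm (∏ i, a i ^ nn i) ((mm j : ℕ) : K), mul_assoc,
        ← Finset.prod_mul_distrib]
      congr 1
      refine Finset.prod_congr rfl fun i _ => ?_
      rw [← pow_add]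
      congr 1
      by_cases hij : i = j
      · rw [if_pos hij]
        have hgei : 1 ≤ mm i := by rw [hij]; exact hge
        omega
      · rw [if_neg hij]
        omega
  have keyLB : ∀ α β : Fin r → Fin p, Dlin (μ α * μ β) = μ α * Dlin (μ β) + μ β * Dlin (μ α) := by
    intro α β
    have h1 : μ α * μ β = ∏ i, a i ^ ((α i : ℕ) + (β i : ℕ)) := by
      rw [hμ]
      simp only
      rw [← Finset.prod_mul_distrib]
      exact Finset.prod_congr rfl fun i _ => (pow_add _ _ _).symm
    have e1 : Dlin (∏ i, a i ^ ((α i : ℕ) + (β i : ℕ)))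
        = dval (fun i => (α i : ℕ) + (β i : ℕ)) := keyL _
    have e2 : Dlin (∏ i, a i ^ ((β i : ℕ))) = dval (fun i => (β i : ℕ)) := keyL _
    have e3 : Dlin (∏ i, a i ^ ((α i : ℕ))) = dval (fun i => (α i : ℕ)) := keyL _
    have hμα : μ α = ∏ i, a i ^ ((α i : ℕ)) := rfl
    have hμβ : μ β = ∏ i, a i ^ ((β i : ℕ)) := rfl
    have h4 := hH (fun i => ((α i : ℕ))) (fun i => ((β i : ℕ)))
    have h5 := hH (fun i => ((β i : ℕ))) (fun i => ((α i : ℕ)))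
    beta_reduce at h4 h5
    rw [h1, e1, hμα, hμβ, e2, e3, h4, h5]
    have hswap : (∏ i, a i ^ (((β i : ℕ) + (α i : ℕ)) - if i = j then 1 else 0)) =
        ∏ i, a i ^ (((α i : ℕ) + (β i : ℕ)) - if i = j then 1 else 0) := by
      refine Finset.prod_congr rfl fun i _ => ?_
      rw [Nat.add_comm]
    rw [hswap, hdval]
    simp only
    push_cast
    ring
  have hgen : ∀ x y : K, Dlin (x * y) = x * Dlin y + y * Dlin x := by
    set L1 : K →ₗ[F] K →ₗ[F] K := (LinearMap.mul F K).compr₂ Dlin with hL1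
    set L2 : K →ₗ[F] K →ₗ[F] K := (LinearMap.mul F K).compl₂ Dlin with hL2
    set L3 : K →ₗ[F] K →ₗ[F] K := ((LinearMap.mul F K).compl₂ Dlin).flip with hL3
    have hL : L1 = L2 + L3 := by
      apply B.ext
      intro α
      apply B.ext
      intro β
      simp only [hL1, hL2, hL3, LinearMap.add_apply, LinearMap.compr₂_apply,
        LinearMap.compl₂_apply, LinearMap.flip_apply, LinearMap.mul_apply']
      rw [hBμ, hBμ]
      exact keyLB α β
    intro x y
    have h := LinearMap.congr_fun (LinearMap.congr_fun hL x) y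
    simpa only [hL1, hL2, hL3, LinearMap.add_apply, LinearMap.compr₂_apply,
      LinearMap.compl₂_apply, LinearMap.flip_apply, LinearMap.mul_apply'] using h
  have honez : Dlin 1 = 0 := by
    have h1 : Dlin (∏ i : Fin r, a i ^ (0 : ℕ)) = dval (fun _ => 0) := keyL _
    rw [show (1 : K) = ∏ i : Fin r, a i ^ (0 : ℕ) from (by simp), h1, hdval]
    simp
  set Dder : Derivation F K K :=
    { toLinearMap := Dlin
      map_one_eq_zero' := honez
      leibniz' := by
        intro x y
        simp only [smul_eq_mul]
        exact hgen x y } with hDder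
  refine ⟨Dder.restrictScalars ℤ, fun i => ?_⟩
  have hai : a i = ∏ l, a l ^ (if l = i then 1 else 0) := by
    rw [Finset.prod_eq_single i ?_ ?_]
    · simp
    · intro l _ hl
      simp [hl]
    · simp
  have hDD : Dder (a i) = Dlin (a i) := rfl
  have hL : Dlin (a i) = dval (fun l => if l = i then 1 else 0) := by
    conv_lhs => rw [hai]
    exact keyL _
  rw [Derivation.restrictScalars_apply, hDD, hL, hdval]
  by_cases hij : i = j
  · subst hij
    simp
  · have h0 : ¬ (j = i) := fun h => hij h.symm
    simp [hij, h0]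
theorem sort_aux {N n : ℕ} (f : Fin n → Fin N) (hf : Function.Injective f) :
    ∃ (ε : ℤˣ) (S : {S : Finset (Fin N) // S.card = n}),
      ∀ (R M : Type) [CommRing R] [AddCommGroup M] [Module R M] (u : Fin N → M),
        ExteriorAlgebra.ιMulti R n (fun i => u (f i)) =
          ε • ExteriorAlgebra.ιMulti R n (fun i => u (S.1.orderIsoOfFin S.2 i)) := by
  classical
  set S : Finset (Fin N) := Finset.image f Finset.univ with hSdef
  have hS : S.card = n := by
    rw [hSdef, Finset.card_image_of_injective _ hf, Finset.card_univ, Fintype.card_fin]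
  have hmem : ∀ i, f i ∈ S := fun i => Finset.mem_image_of_mem f (Finset.mem_univ i)
  have hcard : Fintype.card {x // x ∈ S} = n := by rw [Fintype.card_coe, hS]
  set g : Fin n → {x // x ∈ S} := fun i => ⟨f i, hmem i⟩ with hg
  have hginj : Function.Injective g := fun i j hij => hf (congrArg Subtype.val hij)
  have hgbij : Function.Bijective g := by
    rw [Fintype.bijective_iff_injective_and_card]
    exact ⟨hginj, by rw [hcard, Fintype.card_fin]⟩
  set eg : Fin n ≃ {x // x ∈ S} := Equiv.ofBijective g hgbij with heg
  set σ : Equiv.Perm (Fin n) := eg.trans (S.orderIsoOfFin hS).toEquiv.symm with hσ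
  have hkey : ∀ i, (S.orderIsoOfFin hS (σ i) : Fin N) = f i := by
    intro i
    have : (S.orderIsoOfFin hS) (σ i) = eg i := by
      rw [hσ]
      simp
    rw [this]
    rfl
  refine ⟨Equiv.Perm.sign σ, ⟨S, hS⟩, ?_⟩
  intro R M _ _ _ u
  have h1 : (fun i => u (f i)) = (fun i => u ((S.orderIsoOfFin hS i : Fin N))) ∘ σ := by
    funext i
    simp only [Function.comp_apply]
    rw [hkey i]
  rw [h1]
  exact (ExteriorAlgebra.ιMulti R n).map_perm _ σ
open Finset in
theorem deriv_expand (p : ℕ) [Fact p.Prime] (K : Type) [Field K] [CharP K p]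
    (k E : Subfield K) [PerfectField ↥k] (hkE : k ≤ E)
    (r m : ℕ) (hmr : m ≤ r) (a : Fin r → K) (haE : ∀ i : Fin r, (i : ℕ) < m → a i ∈ E)
    (hbasisE : (E : Set K) ⊆ Subfield.closure
      ((k : Set K) ∪ ((fun x : K => x ^ p) '' (E : Set K)) ∪ (a '' {i : Fin r | (i : ℕ) < m})))
    (x : K) (hx : x ∈ E) :
    ∃ lam : Fin m → ↥E,
      KaehlerDifferential.D ℤ ↥E ⟨x, hx⟩ =
        ∑ l : Fin m, lam l • KaehlerDifferential.D ℤ ↥E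
          ⟨a (Fin.castLE hmr l), haE _ l.2⟩ ∧
      KaehlerDifferential.D ℤ K x =
        ∑ l : Fin m, (lam l : K) • KaehlerDifferential.D ℤ K (a (Fin.castLE hmr l)) := by
  classical
  have hp : p.Prime := Fact.out
  set DE := KaehlerDifferential.D ℤ ↥E with hDE
  set DK := KaehlerDifferential.D ℤ K with hDK
  set vv : Fin m → KaehlerDifferential ℤ ↥E :=
    fun l => DE ⟨a (Fin.castLE hmr l), haE _ l.2⟩ with hvv
  set ww : Fin m → KaehlerDifferential ℤ K := fun l => DK (a (Fin.castLE hmr l)) with hww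
  set P : K → Prop := fun x => ∃ hx : x ∈ E, ∃ lam : Fin m → ↥E,
    DE ⟨x, hx⟩ = ∑ l : Fin m, lam l • vv l ∧ DK x = ∑ l : Fin m, (lam l : K) • ww l with hP
  have hpow : ∀ (y : K) (hy : y ∈ E), P (y ^ p) := by
    intro y hy
    refine ⟨pow_mem hy p, 0, ?_, ?_⟩
    · have : (⟨y ^ p, pow_mem hy p⟩ : ↥E) = (⟨y, hy⟩ : ↥E) ^ p := by
        ext; push_cast; ring
      rw [this, Derivation.leibniz_pow, ← Nat.cast_smul_eq_nsmul ↥E, CharP.cast_eq_zero ↥E p,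
        zero_smul]
      simp
    · rw [Derivation.leibniz_pow, ← Nat.cast_smul_eq_nsmul K, CharP.cast_eq_zero K p, zero_smul]
      simp
  have hmul : ∀ x y, P x → P y → P (x * y) := by
    rintro x y ⟨hx, lx, hex, hkx⟩ ⟨hy, ly, hey, hky⟩
    refine ⟨mul_mem hx hy, fun l => (⟨x, hx⟩ : ↥E) * ly l + (⟨y, hy⟩ : ↥E) * lx l, ?_, ?_⟩
    · have hxy : (⟨x * y, mul_mem hx hy⟩ : ↥E) = ⟨x, hx⟩ * ⟨y, hy⟩ := rfl
      rw [hxy, Derivation.leibniz, hex, hey, Finset.smul_sum, Finset.smul_sum,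
        ← Finset.sum_add_distrib]
      refine Finset.sum_congr rfl fun l _ => ?_
      rw [add_smul, smul_smul, smul_smul]
    · rw [Derivation.leibniz, hkx, hky, Finset.smul_sum, Finset.smul_sum,
        ← Finset.sum_add_distrib]
      refine Finset.sum_congr rfl fun l _ => ?_
      push_cast
      rw [add_smul, smul_smul, smul_smul]
  have hone : P 1 := by
    refine ⟨one_mem E, 0, ?_, ?_⟩
    · have : (⟨(1 : K), one_mem E⟩ : ↥E) = 1 := rfl
      rw [this]
      simp
    · simp
  have hzero : P 0 := by
    refine ⟨zero_mem E, 0, ?_, ?_⟩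
    · have : (⟨(0 : K), zero_mem E⟩ : ↥E) = 0 := rfl
      rw [this]
      simp
    · simp
  have hadd : ∀ x y, P x → P y → P (x + y) := by
    rintro x y ⟨hx, lx, hex, hkx⟩ ⟨hy, ly, hey, hky⟩
    refine ⟨add_mem hx hy, lx + ly, ?_, ?_⟩
    · have hxy : (⟨x + y, add_mem hx hy⟩ : ↥E) = ⟨x, hx⟩ + ⟨y, hy⟩ := rfl
      rw [hxy, map_add, hex, hey, ← Finset.sum_add_distrib]
      exact Finset.sum_congr rfl fun l _ => by rw [Pi.add_apply, add_smul]
    · rw [map_add, hkx, hky, ← Finset.sum_add_distrib]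
      refine Finset.sum_congr rfl fun l _ => ?_
      rw [Pi.add_apply]
      push_cast
      rw [add_smul]
  have hneg : ∀ x, P x → P (-x) := by
    rintro x ⟨hx, lx, hex, hkx⟩
    refine ⟨neg_mem hx, -lx, ?_, ?_⟩
    · have hxy : (⟨-x, neg_mem hx⟩ : ↥E) = -⟨x, hx⟩ := rfl
      rw [hxy, map_neg, hex, ← Finset.sum_neg_distrib]
      exact Finset.sum_congr rfl fun l _ => by rw [Pi.neg_apply, neg_smul]
    · rw [map_neg, hkx, ← Finset.sum_neg_distrib]
      refine Finset.sum_congr rfl fun l _ => ?_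
      rw [Pi.neg_apply]
      push_cast
      rw [neg_smul]
  have hinv : ∀ x, P x → P x⁻¹ := by
    rintro x ⟨hx, lx, hex, hkx⟩
    by_cases h0 : x = 0
    · rw [h0, inv_zero]
      exact hzero
    refine ⟨inv_mem hx, fun l => -(⟨x, hx⟩ : ↥E)⁻¹ ^ 2 * lx l, ?_, ?_⟩
    · have hxy : (⟨x⁻¹, inv_mem hx⟩ : ↥E) = (⟨x, hx⟩ : ↥E)⁻¹ := rfl
      rw [hxy, Derivation.leibniz_inv, hex, Finset.smul_sum]
      refine Finset.sum_congr rfl fun l _ => ?_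
      rw [smul_smul]
    · rw [Derivation.leibniz_inv, hkx, Finset.smul_sum]
      refine Finset.sum_congr rfl fun l _ => ?_
      rw [smul_smul]
      congr 1
  set T : Subfield K :=
    { carrier := {x | P x}
      mul_mem' := fun ha hb => hmul _ _ ha hb
      one_mem' := hone
      add_mem' := fun ha hb => hadd _ _ ha hb
      zero_mem' := hzero
      neg_mem' := fun ha => hneg _ ha
      inv_mem' := fun x ha => hinv x ha } with hT
  have hgen : Subfield.closure
      ((k : Set K) ∪ ((fun x : K => x ^ p) '' (E : Set K)) ∪ (a '' {i : Fin r | (i : ℕ) < m})) ≤ T := by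
    rw [Subfield.closure_le]
    rintro z ((hz | ⟨y, hyE, rfl⟩) | ⟨i, hi, rfl⟩)
    · obtain ⟨y, hy⟩ := surjective_frobenius ↥k p ⟨z, hz⟩
      have : z = (y : K) ^ p := by
        have := congrArg (Subfield.subtype k) hy
        rw [frobenius_def] at this
        exact_mod_cast this.symm
      rw [this]
      exact hpow _ (hkE y.2)
    · exact hpow _ hyE
    · have hi' : (i : ℕ) < m := hi
      set l0 : Fin m := ⟨(i : ℕ), hi'⟩ with hl0
      have hcast : Fin.castLE hmr l0 = i := by
        ext
        rfl
      refine ⟨haE i hi', Pi.single l0 1, ?_, ?_⟩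
      · rw [Finset.sum_eq_single l0 ?_ ?_]
        · rw [Pi.single_eq_same, one_smul]
          exact congrArg DE (Subtype.ext (congrArg a hcast.symm))
        · intro b _ hb
          rw [Pi.single_eq_of_ne hb, zero_smul]
        · simp
      · rw [Finset.sum_eq_single l0 ?_ ?_]
        · rw [Pi.single_eq_same, OneMemClass.coe_one, one_smul]
          exact (congrArg DK (congrArg a hcast)).symm
        · intro b _ hb
          rw [Pi.single_eq_of_ne hb]
          simp
        · simp
  obtain ⟨_, lam, h1, h2⟩ := hgen (hbasisE hx)
  exact ⟨lam, h1, h2⟩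
open Finset in
theorem extract_coeffs (K : Type) [Field K] (r : ℕ) (a : Fin r → K)
    (hdual : ∀ j : Fin r, ∃ D : Derivation ℤ K K, ∀ i, D (a i) = if i = j then 1 else 0)
    (n m : ℕ) (hmr : m ≤ r)
    (γ : {S : Finset (Fin m) // S.card = n} → K)
    (h : ∑ S : {S : Finset (Fin m) // S.card = n}, γ S •
        ExteriorAlgebra.ιMulti K n (fun i =>
          KaehlerDifferential.D ℤ K (a (Fin.castLE hmr (S.1.orderIsoOfFin S.2 i)))) = 0)
    (T : {S : Finset (Fin m) // S.card = n}) : γ T = 0 := by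
  classical
  choose Dj hDj using hdual
  set ℓ : Fin r → (KaehlerDifferential ℤ K →ₗ[K] K) :=
    fun j => (Dj j).liftKaehlerDifferential with hℓdef
  have hℓ : ∀ j i, ℓ j (KaehlerDifferential.D ℤ K (a i)) = if i = j then 1 else 0 := by
    intro j i
    rw [hℓdef]
    simp only
    rw [Derivation.liftKaehlerDifferential_comp_D]
    exact hDj j i
  set g : (KaehlerDifferential ℤ K) [⋀^Fin n]→ₗ[K] K :=
    (Matrix.detRowAlternating (n := Fin n) (R := K)).compLinearMap
      (LinearMap.pi fun i : Fin n => ℓ (Fin.castLE hmr (T.1.orderIsoOfFin T.2 i))) with hgdef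
  set Φ : ExteriorAlgebra K (KaehlerDifferential ℤ K) →ₗ[K] K :=
    ExteriorAlgebra.liftAlternating
      (Function.update (fun d => (0 : (KaehlerDifferential ℤ K) [⋀^Fin d]→ₗ[K] K)) n g) with hΦdef
  have hdet : ∀ M : Matrix (Fin n) (Fin n) K, Matrix.detRowAlternating M = M.det := fun _ => rfl
  have hgv : ∀ S : {S : Finset (Fin m) // S.card = n},
      g (fun i => KaehlerDifferential.D ℤ K (a (Fin.castLE hmr (S.1.orderIsoOfFin S.2 i)))) =
      if S = T then 1 else 0 := by
    intro S
    rw [hgdef]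
    rw [AlternatingMap.compLinearMap_apply]
    have hmat : (fun j => (LinearMap.pi fun i : Fin n => ℓ (Fin.castLE hmr (T.1.orderIsoOfFin T.2 i)))
        (KaehlerDifferential.D ℤ K (a (Fin.castLE hmr (S.1.orderIsoOfFin S.2 j))))) =
        fun j i => if (S.1.orderIsoOfFin S.2 j : Fin m) = (T.1.orderIsoOfFin T.2 i : Fin m)
          then (1 : K) else 0 := by
      funext j i
      rw [LinearMap.pi_apply, hℓ]
      congr 1
      simp only [eq_iff_iff]
      exact ⟨fun hc => Fin.castLE_injective hmr hc, fun hc => by rw [hc]⟩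
    rw [hmat]
    by_cases hST : S = T
    · subst hST
      rw [if_pos rfl]
      have hid : (fun j i => if (S.1.orderIsoOfFin S.2 j : Fin m) = (S.1.orderIsoOfFin S.2 i : Fin m)
          then (1 : K) else 0) = (1 : Matrix (Fin n) (Fin n) K) := by
        funext j i
        rw [Matrix.one_apply]
        congr 1
        simp only [eq_iff_iff]
        exact ⟨fun hc => (Finset.orderIsoOfFin S.1 S.2).injective (Subtype.ext hc),
          fun hc => by rw [hc]⟩
      rw [hid, hdet, Matrix.det_one]
    · rw [if_neg hST]
      have hsub : ¬ T.1 ⊆ S.1 := by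
        intro hsub
        exact hST (Subtype.ext (Finset.eq_of_subset_of_card_le hsub (by rw [S.2, T.2])).symm)
      obtain ⟨t, htT, htS⟩ := Finset.not_subset.mp hsub
      set i0 : Fin n := (T.1.orderIsoOfFin T.2).symm ⟨t, htT⟩ with hi0
      refine (hdet _).trans ?_
      apply Matrix.det_eq_zero_of_column_eq_zero i0
      intro j
      have hT : (T.1.orderIsoOfFin T.2 i0 : Fin m) = t := by
        rw [hi0, OrderIso.apply_symm_apply]
      rw [hT]
      refine if_neg fun hc => htS ?_
      rw [← hc]
      exact Finset.coe_mem _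
  have hΦ := congrArg Φ h
  rw [map_sum, map_zero] at hΦ
  have heval : ∀ S : {S : Finset (Fin m) // S.card = n},
      Φ (γ S • ExteriorAlgebra.ιMulti K n (fun i =>
          KaehlerDifferential.D ℤ K (a (Fin.castLE hmr (S.1.orderIsoOfFin S.2 i))))) =
      γ S * (if S = T then 1 else 0) := by
    intro S
    rw [map_smul, hΦdef]
    rw [ExteriorAlgebra.liftAlternating_apply_ιMulti, Function.update_self, hgv S, smul_eq_mul]
  rw [Finset.sum_congr rfl (fun S _ => heval S)] at hΦ
  rw [Finset.sum_eq_single T ?_ ?_] at hΦ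
  · rw [if_pos rfl, mul_one] at hΦ
    exact hΦ
  · intro b _ hb
    rw [if_neg hb, mul_zero]
  · intro hT
    exact absurd (Finset.mem_univ T) hT

set_option maxHeartbeats 3200000 in
set_option synthInstance.maxHeartbeats 1000000 in
/-- Let `K` be a field of characteristic `p` with `p`-basis `a₁,…,a_r` over a
perfect subfield `k`, and `E ⊆ K` an intermediate field such that `a₁,…,a_m` (`m ≤ r`) form a
`p`-basis of `E` over `k`.  Then for every `n ≥ 0` the natural map `Ω^n_E → Ω^n_K` induced by
the inclusion (any additive map `φ` sending `b·dc₁∧⋯∧dc_n` with `b, cᵢ ∈ E` to the same form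
over `K`) is injective on `n`-forms. -/
theorem kaehler_nforms_injective_of_pBasis
    (p : ℕ) [Fact p.Prime] (K : Type) [Field K] [CharP K p]
    (k E : Subfield K) [PerfectField ↥k] (hkE : k ≤ E)
    (r m : ℕ) (hmr : m ≤ r)
    (a : Fin r → K) (haE : ∀ i : Fin r, (i : ℕ) < m → a i ∈ E)
    (hbasisK : Subfield.closure ((k : Set K) ∪ Set.range (frobenius K p) ∪ Set.range a) = ⊤)
    (hdimK : Module.finrank (↥(frobenius K p).fieldRange) K = p ^ r)
    (hbasisE : (E : Set K) ⊆ Subfield.closure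
      ((k : Set K) ∪ ((fun x : K => x ^ p) '' (E : Set K)) ∪ (a '' {i : Fin r | (i : ℕ) < m})))
    [CharP ↥E p]
    (hdimE : Module.finrank (↥(frobenius ↥E p).fieldRange) ↥E = p ^ m)
    (φ : ExteriorAlgebra ↥E (KaehlerDifferential ℤ ↥E) →+
         ExteriorAlgebra K (KaehlerDifferential ℤ K))
    (hφ : ∀ (d : ℕ) (b : ↥E) (c : Fin d → ↥E),
      φ (b • ExteriorAlgebra.ιMulti ↥E d fun i => KaehlerDifferential.D ℤ ↥E (c i)) =
        (b : K) • ExteriorAlgebra.ιMulti K d fun i => KaehlerDifferential.D ℤ K ((c i : K)))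
    (n : ℕ) :
    Set.InjOn φ (nForms ↥E n) := by
  classical
  intro x hx y hy hxy
  suffices h : ∀ ω ∈ nForms ↥E n, φ ω = 0 → ω = 0 by
    have hmem : x - y ∈ nForms ↥E n := sub_mem hx hy
    have h0 : φ (x - y) = 0 := by rw [map_sub, hxy, sub_self]
    exact sub_eq_zero.mp (h _ hmem h0)
  intro ω hω hφω
  set v : Fin m → KaehlerDifferential ℤ ↥E :=
    fun l => KaehlerDifferential.D ℤ ↥E ⟨a (Fin.castLE hmr l), haE _ l.2⟩ with hv
  set w : Fin r → KaehlerDifferential ℤ K :=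
    fun i => KaehlerDifferential.D ℤ K (a i) with hw
  -- Step 1: unsorted representation of every element of `nForms`.
  have main : ∀ ω' ∈ nForms ↥E n, ∃ β : (Fin n → Fin m) → ↥E,
      ω' = ∑ f : Fin n → Fin m, β f •
          ExteriorAlgebra.ιMulti ↥E n (fun i => v (f i)) ∧
      φ ω' = ∑ f : Fin n → Fin m, (β f : K) •
          ExteriorAlgebra.ιMulti K n (fun i => w (Fin.castLE hmr (f i))) := by
    intro ω' hω'
    refine AddSubgroup.closure_induction ?_ ?_ ?_ ?_ hω'
    · rintro x ⟨b, c, rfl⟩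
      have hce : ∀ i : Fin n, ∃ lam : Fin m → ↥E,
          KaehlerDifferential.D ℤ ↥E (c i) = ∑ l : Fin m, lam l • v l ∧
          KaehlerDifferential.D ℤ K ((c i : K)) =
            ∑ l : Fin m, (lam l : K) • w (Fin.castLE hmr l) := by
        intro i
        obtain ⟨lam, h1, h2⟩ :=
          deriv_expand p K k E hkE r m hmr a haE hbasisE (c i : K) (c i).2
        exact ⟨lam, h1, h2⟩
      choose lam hlamE hlamK using hce
      refine ⟨fun f => b * ∏ i, lam i (f i), ?_, ?_⟩
      · have h1 : (fun i => KaehlerDifferential.D ℤ ↥E (c i)) =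
            fun i => ∑ l : Fin m, lam i l • v l := funext hlamE
        rw [h1]
        have h2 := (ExteriorAlgebra.ιMulti ↥E n).toMultilinearMap.map_sum
          (g := fun i l => lam i l • v l)
        simp only [AlternatingMap.coe_multilinearMap] at h2
        rw [h2, Finset.smul_sum]
        refine Finset.sum_congr rfl fun f _ => ?_
        have h3 := (ExteriorAlgebra.ιMulti ↥E n).toMultilinearMap.map_smul_univ
          (fun i => lam i (f i)) (fun i => v (f i))
        simp only [AlternatingMap.coe_multilinearMap] at h3
        rw [h3, smul_smul]
      · rw [hφ n b c]
        have h1 : (fun i => KaehlerDifferential.D ℤ K ((c i : K))) =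
            fun i => ∑ l : Fin m, (lam i l : K) • w (Fin.castLE hmr l) := funext hlamK
        rw [h1]
        have h2 := (ExteriorAlgebra.ιMulti K n).toMultilinearMap.map_sum
          (g := fun i l => (lam i l : K) • w (Fin.castLE hmr l))
        simp only [AlternatingMap.coe_multilinearMap] at h2
        rw [h2, Finset.smul_sum]
        refine Finset.sum_congr rfl fun f _ => ?_
        have h3 := (ExteriorAlgebra.ιMulti K n).toMultilinearMap.map_smul_univ
          (fun i => (lam i (f i) : K)) (fun i => w (Fin.castLE hmr (f i)))
        simp only [AlternatingMap.coe_multilinearMap] at h3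
        rw [h3, smul_smul]
        congr 1
        have hc1 : ((b * ∏ i, lam i (f i) : ↥E) : K) = E.subtype (b * ∏ i, lam i (f i)) := rfl
        rw [hc1, map_mul, map_prod]
        rfl
    · exact ⟨0, by simp, by simp⟩
    · rintro x y _ _ ⟨βx, hxE, hxK⟩ ⟨βy, hyE, hyK⟩
      refine ⟨βx + βy, ?_, ?_⟩
      · rw [hxE, hyE, ← Finset.sum_add_distrib]
        exact Finset.sum_congr rfl fun f _ => by rw [Pi.add_apply, add_smul]
      · rw [map_add, hxK, hyK, ← Finset.sum_add_distrib]
        refine Finset.sum_congr rfl fun f _ => ?_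
        rw [Pi.add_apply]
        push_cast
        rw [add_smul]
    · rintro x _ ⟨βx, hxE, hxK⟩
      refine ⟨-βx, ?_, ?_⟩
      · rw [hxE, ← Finset.sum_neg_distrib]
        exact Finset.sum_congr rfl fun f _ => by rw [Pi.neg_apply, neg_smul]
      · rw [map_neg, hxK, ← Finset.sum_neg_distrib]
        refine Finset.sum_congr rfl fun f _ => ?_
        rw [Pi.neg_apply]
        push_cast
        rw [neg_smul]
  obtain ⟨β, hβE, hβK⟩ := main ω hω
  -- Step 2: sort the representation.
  choose εs Ss hkey using fun (f : Fin n → Fin m) (hf : Function.Injective f) => sort_aux f hf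
  obtain ⟨γ, hγ⟩ : ∃ γ : {S : Finset (Fin m) // S.card = n} → ↥E,
      ∀ T, γ T = ∑ f : Fin n → Fin m, (if h : Function.Injective f then
        (if Ss f h = T then ((εs f h : ℤ) : ↥E) * β f else 0) else 0) :=
    ⟨_, fun T => rfl⟩
  have hsortE : ω = ∑ T : {S : Finset (Fin m) // S.card = n},
      γ T • ExteriorAlgebra.ιMulti ↥E n (fun i => v (T.1.orderIsoOfFin T.2 i)) := by
    have hstep := hγ
    have hmain : (∑ T : {S : Finset (Fin m) // S.card = n},
        γ T • ExteriorAlgebra.ιMulti ↥E n (fun i => v (T.1.orderIsoOfFin T.2 i))) =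
        ∑ f : Fin n → Fin m, β f • ExteriorAlgebra.ιMulti ↥E n (fun i => v (f i)) := by
      calc (∑ T : {S : Finset (Fin m) // S.card = n},
          γ T • ExteriorAlgebra.ιMulti ↥E n (fun i => v (T.1.orderIsoOfFin T.2 i)))
          = ∑ T : {S : Finset (Fin m) // S.card = n}, ∑ f : Fin n → Fin m,
            (if h : Function.Injective f then
              (if Ss f h = T then ((εs f h : ℤ) : ↥E) * β f else 0) else 0) •
            ExteriorAlgebra.ιMulti ↥E n (fun i => v (T.1.orderIsoOfFin T.2 i)) :=
          Finset.sum_congr rfl (fun T _ => by rw [hstep T, Finset.sum_smul])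
        _ = ∑ f : Fin n → Fin m, ∑ T : {S : Finset (Fin m) // S.card = n},
            (if h : Function.Injective f then
              (if Ss f h = T then ((εs f h : ℤ) : ↥E) * β f else 0) else 0) •
            ExteriorAlgebra.ιMulti ↥E n (fun i => v (T.1.orderIsoOfFin T.2 i)) :=
          Finset.sum_comm
        _ = ∑ f : Fin n → Fin m, β f • ExteriorAlgebra.ιMulti ↥E n (fun i => v (f i)) := by
          refine Finset.sum_congr rfl fun f _ => ?_
          by_cases hf : Function.Injective f
          · simp only [dif_pos hf]
            rw [Finset.sum_eq_single (Ss f hf) ?_ ?_]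
            · rw [if_pos rfl]
              rw [hkey f hf ↥E (KaehlerDifferential ℤ ↥E) v, Units.smul_def,
                ← Int.cast_smul_eq_zsmul ↥E, smul_smul, mul_comm]
            · intro b _ hb
              rw [if_neg (Ne.symm hb), zero_smul]
            · intro hT
              exact absurd (Finset.mem_univ _) hT
          · simp only [dif_neg hf]
            have h0 : ExteriorAlgebra.ιMulti ↥E n (fun i => v (f i)) = 0 := by
              apply AlternatingMap.map_eq_zero_of_not_injective
              intro hinj
              exact hf fun i j hij => hinj (show v (f i) = v (f j) from congrArg v hij)
            rw [h0, smul_zero]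
            simp
    rw [hβE, ← hmain]
  have hsortK : φ ω = ∑ T : {S : Finset (Fin m) // S.card = n},
      (γ T : K) • ExteriorAlgebra.ιMulti K n
        (fun i => w (Fin.castLE hmr (T.1.orderIsoOfFin T.2 i))) := by
    have hstep : ∀ T : {S : Finset (Fin m) // S.card = n}, ((γ T : ↥E) : K) =
        ∑ f : Fin n → Fin m, (if h : Function.Injective f then
          (if Ss f h = T then ((εs f h : ℤ) : K) * (β f : K) else 0) else 0) := by
      intro T
      rw [hγ T]
      have hc1 : ((∑ f : Fin n → Fin m, (if h : Function.Injective f then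
          (if Ss f h = T then ((εs f h : ℤ) : ↥E) * β f else 0) else 0) : ↥E) : K) =
          E.subtype (∑ f : Fin n → Fin m, (if h : Function.Injective f then
          (if Ss f h = T then ((εs f h : ℤ) : ↥E) * β f else 0) else 0)) := rfl
      rw [hc1, map_sum]
      refine Finset.sum_congr rfl fun f _ => ?_
      by_cases hf : Function.Injective f
      · simp only [dif_pos hf]
        by_cases hT : Ss f hf = T
        · simp only [if_pos hT]
          rw [map_mul, map_intCast]
          rfl
        · simp only [if_neg hT, map_zero]
      · simp only [dif_neg hf, map_zero]
    have hmain : (∑ T : {S : Finset (Fin m) // S.card = n},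
        (γ T : K) • ExteriorAlgebra.ιMulti K n
          (fun i => w (Fin.castLE hmr (T.1.orderIsoOfFin T.2 i)))) =
        ∑ f : Fin n → Fin m, (β f : K) •
          ExteriorAlgebra.ιMulti K n (fun i => w (Fin.castLE hmr (f i))) := by
      calc (∑ T : {S : Finset (Fin m) // S.card = n},
          (γ T : K) • ExteriorAlgebra.ιMulti K n
            (fun i => w (Fin.castLE hmr (T.1.orderIsoOfFin T.2 i))))
          = ∑ T : {S : Finset (Fin m) // S.card = n}, ∑ f : Fin n → Fin m,
            (if h : Function.Injective f then
              (if Ss f h = T then ((εs f h : ℤ) : K) * (β f : K) else 0) else 0) •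
            ExteriorAlgebra.ιMulti K n
              (fun i => w (Fin.castLE hmr (T.1.orderIsoOfFin T.2 i))) :=
          Finset.sum_congr rfl (fun T _ => by rw [hstep T, Finset.sum_smul])
        _ = ∑ f : Fin n → Fin m, ∑ T : {S : Finset (Fin m) // S.card = n},
            (if h : Function.Injective f then
              (if Ss f h = T then ((εs f h : ℤ) : K) * (β f : K) else 0) else 0) •
            ExteriorAlgebra.ιMulti K n
              (fun i => w (Fin.castLE hmr (T.1.orderIsoOfFin T.2 i))) :=
          Finset.sum_comm
        _ = ∑ f : Fin n → Fin m, (β f : K) •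
            ExteriorAlgebra.ιMulti K n (fun i => w (Fin.castLE hmr (f i))) := by
          refine Finset.sum_congr rfl fun f _ => ?_
          by_cases hf : Function.Injective f
          · simp only [dif_pos hf]
            rw [Finset.sum_eq_single (Ss f hf) ?_ ?_]
            · rw [if_pos rfl]
              rw [hkey f hf K (KaehlerDifferential ℤ K) (fun l => w (Fin.castLE hmr l)),
                Units.smul_def, ← Int.cast_smul_eq_zsmul K, smul_smul, mul_comm]
            · intro b _ hb
              rw [if_neg (Ne.symm hb), zero_smul]
            · intro hT
              exact absurd (Finset.mem_univ _) hT
          · simp only [dif_neg hf]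
            have h0 : ExteriorAlgebra.ιMulti K n (fun i => w (Fin.castLE hmr (f i))) = 0 := by
              apply AlternatingMap.map_eq_zero_of_not_injective
              intro hinj
              exact hf fun i j hij => hinj (show w (Fin.castLE hmr (f i)) = w (Fin.castLE hmr (f j))
                from congrArg (fun l => w (Fin.castLE hmr l)) hij)
            rw [h0, smul_zero]
            simp
    rw [hβK, ← hmain]
  -- Step 3: extract coefficients.
  have hdual := fun j : Fin r => exists_dual_derivations p K k r a hbasisK hdimK j
  have hzero : ∀ T, (γ T : K) = 0 := by
    intro T
    apply extract_coeffs K r a hdual n m hmr (fun T => (γ T : K))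
    rw [← hsortK]
    exact hφω
  have hγ0 : ∀ T, γ T = 0 := fun T => by
    have := hzero T
    exact_mod_cast this
  rw [hsortE]
  simp [hγ0]
end

section
/- Let K be a field of characteristic p with a p-basis a_1, ..., a_r over a perfect field k, and let E ⊆ K be an intermediate field such that a_1, ..., a_m (m ≤ r) form a p-basis of E over k. Then for every n ≥ 0, the induced map Ω^n_E / Z^n_E → Ω^n_K / Z^n_K is injective, where Z^n_F = {ω ∈ Ω^n_F : dω = 0} denotes the closed (cycle) n-forms. -/
set_option synthInstance.maxHeartbeats 400000
set_option maxHeartbeats 800000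
set_option maxHeartbeats 3200000
set_option synthInstance.maxHeartbeats 1600000

open Finset in
theorem alt_expand {R N N' : Type*} [CommRing R] [AddCommGroup N] [Module R N]
    [AddCommGroup N'] [Module R N'] {d m' : ℕ} (f : N [⋀^Fin d]→ₗ[R] N')
    (w : Fin m' → N) (M : Matrix (Fin d) (Fin m') R) :
    f (fun j => ∑ i, M j i • w i) =
      ∑ S : {S : Finset (Fin m') // S.card = d},
        (Matrix.det (Matrix.of fun j j' => M j (S.1.orderEmbOfFin S.2 j'))) •
          f (fun j => w (S.1.orderEmbOfFin S.2 j)) := by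
  classical
  have hms : (f : MultilinearMap R (fun _ : Fin d => N) N') (fun j => ∑ i : Fin m', M j i • w i)
      = ∑ g : Fin d → Fin m', (∏ j, M j (g j)) • f (fun j => w (g j)) := by
    rw [MultilinearMap.map_sum]
    refine Finset.sum_congr rfl fun g _ => ?_
    exact f.map_smul_univ (fun j => M j (g j)) (fun j => w (g j))
  have key : f (fun j => ∑ i : Fin m', M j i • w i)
      = ∑ g ∈ univ.filter (fun g : Fin d → Fin m' => Function.Injective g),
          (∏ j, M j (g j)) • f (fun j => w (g j)) := by
    rw [show f (fun j => ∑ i : Fin m', M j i • w i)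
      = (f : MultilinearMap R (fun _ : Fin d => N) N') (fun j => ∑ i : Fin m', M j i • w i) from rfl,
      hms, ← Finset.sum_filter_add_sum_filter_not univ (fun g : Fin d → Fin m' => Function.Injective g)]
    have h0 : ∑ g ∈ univ.filter (fun g : Fin d → Fin m' => ¬ Function.Injective g),
        (∏ j, M j (g j)) • f (fun j => w (g j)) = 0 := by
      refine Finset.sum_eq_zero fun g hg => ?_
      replace hg := (mem_filter.mp hg).2
      simp only [Function.Injective] at hg
      push_neg at hg
      obtain ⟨j1, j2, he, hne⟩ := hg
      rw [f.map_eq_zero_of_eq (fun j => w (g j)) (show w (g j1) = w (g j2) by rw [he]) hne,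
        smul_zero]
    rw [h0, add_zero]
  rw [key]
  -- turn the RHS into a sum over pairs (S, σ)
  have hperm : ∀ (S : {S : Finset (Fin m') // S.card = d}),
      (Matrix.det (Matrix.of fun j j' => M j (S.1.orderEmbOfFin S.2 j'))) •
          f (fun j => w (S.1.orderEmbOfFin S.2 j))
      = ∑ σ : Equiv.Perm (Fin d),
          (∏ j, M j (S.1.orderEmbOfFin S.2 (σ j))) • f (fun j => w (S.1.orderEmbOfFin S.2 (σ j))) := by
    intro S
    have hdet : Matrix.det (Matrix.of fun j j' => M j (S.1.orderEmbOfFin S.2 j'))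
        = ∑ σ : Equiv.Perm (Fin d), ((Equiv.Perm.sign σ : ℤ) : R) * ∏ j, M j (S.1.orderEmbOfFin S.2 (σ j)) := by
      rw [← Matrix.det_transpose, Matrix.det_apply']
      rfl
    rw [hdet, Finset.sum_smul]
    refine Finset.sum_congr rfl fun σ _ => ?_
    have hmp : f (fun j => w (S.1.orderEmbOfFin S.2 (σ j)))
        = Equiv.Perm.sign σ • f (fun j => w (S.1.orderEmbOfFin S.2 j)) :=
      f.map_perm (fun j => w (S.1.orderEmbOfFin S.2 j)) σ
    rw [hmp, Units.smul_def, ← Int.cast_smul_eq_zsmul R, smul_smul, mul_comm]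
  rw [Finset.sum_congr rfl fun S _ => hperm S, ← Finset.sum_product']
  have hSg : ∀ g : Fin d → Fin m', Function.Injective g → (univ.image g).card = d := fun g hg => by
    rw [Finset.card_image_of_injective _ hg, card_univ, Fintype.card_fin]
  let τ : ∀ g : Fin d → Fin m', Function.Injective g → Equiv.Perm (Fin d) := fun g hg =>
    Equiv.ofBijective
      (fun j => ((univ.image g).orderIsoOfFin (hSg g hg)).symm ⟨g j, by simp⟩)
      (Finite.injective_iff_bijective.mp (fun j1 j2 hj => by
        have h2 := congrArg Subtype.val (congrArg ((univ.image g).orderIsoOfFin (hSg g hg)) hj)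
        rw [((univ.image g).orderIsoOfFin (hSg g hg)).apply_symm_apply,
          ((univ.image g).orderIsoOfFin (hSg g hg)).apply_symm_apply] at h2
        exact hg h2))
  have fact1 : ∀ (g : Fin d → Fin m') (hg : Function.Injective g) (j : Fin d),
      (univ.image g).orderEmbOfFin (hSg g hg) (τ g hg j) = g j := by
    intro g hg j
    rw [← Finset.coe_orderIsoOfFin_apply]
    exact congrArg Subtype.val
      (((univ.image g).orderIsoOfFin (hSg g hg)).apply_symm_apply ⟨g j, by simp⟩)
  refine Finset.sum_bij'
    (fun g hg => ((⟨univ.image g, hSg g (by simpa using (Finset.mem_filter.mp hg).2)⟩ :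
        {S : Finset (Fin m') // S.card = d}),
      τ g (by simpa using (Finset.mem_filter.mp hg).2)))
    (fun x _ => fun j => x.1.1.orderEmbOfFin x.1.2 (x.2 j))
    (fun g hg => by simp) (fun x hx => by
      simp only [Finset.mem_filter, Finset.mem_univ, true_and]
      exact (x.1.1.orderEmbOfFin x.1.2).injective.comp x.2.injective)
    ?_ ?_ ?_
  · intro g hg
    funext j
    exact fact1 g (by simpa using (Finset.mem_filter.mp hg).2) j
  · rintro ⟨⟨S, hS⟩, σ⟩ hx
    have hginj : Function.Injective (fun j => S.orderEmbOfFin hS (σ j)) :=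
      (S.orderEmbOfFin hS).injective.comp σ.injective
    have hSeq : univ.image (fun j => S.orderEmbOfFin hS (σ j)) = S := by
      ext y
      simp only [Finset.mem_image, Finset.mem_univ, true_and]
      constructor
      · rintro ⟨j, rfl⟩; exact S.orderEmbOfFin_mem hS (σ j)
      · intro hy
        refine ⟨σ.symm ((S.orderIsoOfFin hS).symm ⟨y, hy⟩), ?_⟩
        rw [Equiv.apply_symm_apply, ← Finset.coe_orderIsoOfFin_apply]
        exact congrArg Subtype.val ((S.orderIsoOfFin hS).apply_symm_apply ⟨y, hy⟩)
    have htau : ∀ hpf : Function.Injective (fun j => S.orderEmbOfFin hS (σ j)),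
        τ (fun j => S.orderEmbOfFin hS (σ j)) hpf = σ := by
      intro hpf
      apply Equiv.ext
      intro j
      have h2 : ∀ (h1 : (univ.image (fun j => S.orderEmbOfFin hS (σ j))).card = d) (i0 : Fin d),
          (univ.image (fun j => S.orderEmbOfFin hS (σ j))).orderEmbOfFin h1 i0
            = S.orderEmbOfFin hS i0 := by
        rw [hSeq]
        intro h1 i0
        rfl
      have h3 := fact1 (fun j => S.orderEmbOfFin hS (σ j)) hpf j
      rw [h2] at h3
      exact (S.orderEmbOfFin hS).injective h3
    exact Prod.ext (Subtype.ext hSeq) (htau hginj)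
  · intro g hg
    have hginj : Function.Injective g := by simpa using (Finset.mem_filter.mp hg).2
    simp only []
    congr 1
    · exact Finset.prod_congr rfl fun j _ => by rw [fact1 g hginj j]
    · congr 1
      funext j
      rw [fact1 g hginj j]

open Finset in
theorem exists_pderivs (p : ℕ) [Fact p.Prime] (L : Type) [Field L] [CharP L p]
    (t : ℕ) (b : Fin t → L)
    (hspan : ∀ x : L, x ∈ Subfield.closure (Set.range (frobenius L p) ∪ Set.range b))
    (hdim : Module.finrank (↥(frobenius L p).fieldRange) L = p ^ t) :
    ∃ der : Fin t → Derivation ℤ L L,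
      (∀ i j, der i (b j) = if i = j then 1 else 0) ∧
      (∀ x : L, KaehlerDifferential.D ℤ L x
         = ∑ i, der i x • KaehlerDifferential.D ℤ L (b i)) := by
  classical
  have hp : p.Prime := Fact.out
  have hp0 : 0 < p := hp.pos
  set F : Subfield L := (frobenius L p).fieldRange with hF
  have hFmem : ∀ y : L, y ^ p ∈ F := fun y => ⟨y, rfl⟩
  have hsmul : ∀ (c : F) (x : L), c • x = (c : L) * x := fun c x => rfl
  set Mon : (Fin t → ℕ) → L := fun n => ∏ i, b i ^ n i with hMon
  set BB : (Fin t → Fin p) → L := fun α => Mon (fun i => (α i : ℕ)) with hBB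
  have hMulSplit : ∀ q s : Fin t → ℕ, Mon (fun j => p * q j + s j) = (Mon q) ^ p * Mon s := by
    intro q s
    rw [hMon]
    simp only [pow_add, mul_comm p, pow_mul]
    rw [Finset.prod_mul_distrib, ← Finset.prod_pow]
  set W : Submodule ↥F L := Submodule.span ↥F (Set.range BB) with hW
  have hMonW : ∀ n, Mon n ∈ W := by
    intro n
    have h1 : Mon n = (⟨(Mon fun j => n j / p) ^ p, hFmem _⟩ : F) •
        BB (fun j => ⟨n j % p, Nat.mod_lt _ hp0⟩) := by
      rw [hsmul]
      have := hMulSplit (fun j => n j / p) (fun j => n j % p)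
      simp only [Nat.div_add_mod] at this
      exact this
    rw [h1]
    exact W.smul_mem _ (Submodule.subset_span ⟨_, rfl⟩)
  have hone : (1 : L) ∈ W := by
    have : Mon 0 = 1 := by simp [hMon]
    rw [← this]; exact hMonW 0
  have hWmul : ∀ x ∈ W, ∀ y ∈ W, x * y ∈ W := by
    have h2 : W * W ≤ W := by
      rw [hW, Submodule.span_mul_span]
      rw [← hW]
      apply Submodule.span_le.mpr
      rintro z ⟨u, ⟨α, rfl⟩, v, ⟨β, rfl⟩, rfl⟩
      show BB α * BB β ∈ (W : Set L)
      have : BB α * BB β = Mon (fun j => (α j : ℕ) + (β j : ℕ)) := by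
        rw [hBB, hMon]; simp only [pow_add]; rw [Finset.prod_mul_distrib]
      rw [this]
      exact hMonW _
    intro x hx y hy
    exact h2 (Submodule.mul_mem_mul hx hy)
  have hfd : FiniteDimensional ↥F L := FiniteDimensional.of_finrank_pos (by
    rw [hdim]; exact pow_pos hp0 t)
  have hWinv : ∀ x ∈ W, x⁻¹ ∈ W := by
    intro x hx
    rcases eq_or_ne x 0 with rfl | hx0
    · simpa using W.zero_mem
    have hint : IsIntegral ↥F x := IsIntegral.of_finite ↥F x
    have hadj : x⁻¹ ∈ Algebra.adjoin ↥F ({x} : Set L) := hint.inv_mem_adjoin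
    have hpows : ∀ nn : ℕ, x ^ nn ∈ W := by
      intro nn
      induction nn with
      | zero => simpa using hone
      | succ nn ih => rw [pow_succ]; exact hWmul _ ih _ hx
    have hpow : ∀ z ∈ Submonoid.closure ({x} : Set L), z ∈ W := by
      intro z hz
      obtain ⟨nn, rfl⟩ := Submonoid.mem_closure_singleton.mp hz
      exact hpows nn
    have : (Algebra.adjoin ↥F ({x} : Set L) : Set L) ⊆ W := by
      intro z hz
      have h3 : z ∈ Subalgebra.toSubmodule (Algebra.adjoin ↥F ({x} : Set L)) := hz
      rw [Algebra.adjoin_eq_span] at h3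
      have hz2 : z ∈ Submodule.span ↥F ((Submonoid.closure ({x} : Set L) : Set L)) := h3
      refine Submodule.span_le.mpr ?_ hz2
      intro w hw
      exact hpow w hw
    exact this hadj
  -- W is all of L
  have hWfield : ∀ x : L, x ∈ W := by
    intro x
    let W' : Subfield L :=
      { carrier := W
        mul_mem' := fun {x y} hx hy => hWmul x hx y hy
        one_mem' := hone
        add_mem' := fun {x y} hx hy => W.add_mem hx hy
        zero_mem' := W.zero_mem
        neg_mem' := fun {x} hx => W.neg_mem hx
        inv_mem' := fun x hx => hWinv x hx }
    have hsub : Set.range (frobenius L p) ∪ Set.range b ⊆ (W' : Set L) := by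
      rintro z (⟨y, rfl⟩ | ⟨j, rfl⟩)
      · show (frobenius L p) y ∈ W
        have : (frobenius L p) y = (⟨y ^ p, hFmem y⟩ : F) • (1 : L) := by
          rw [hsmul]; simp [frobenius_def]
        rw [this]
        exact W.smul_mem _ hone
      · show b j ∈ W
        have : Mon (Pi.single j 1) = b j := by
          show ∏ i, b i ^ (Pi.single j 1 i) = b j
          rw [Finset.prod_eq_single j (fun i _ hij => by simp [Pi.single_apply, hij])
            (fun h => absurd (Finset.mem_univ j) h)]
          simp
        rw [← this]
        exact hMonW _
    exact (Subfield.closure_le.mpr hsub) (hspan x)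
  -- the monomial basis
  have hcard : Fintype.card (Fin t → Fin p) = Module.finrank ↥F L := by
    rw [hdim, Fintype.card_fun, Fintype.card_fin, Fintype.card_fin]
  have htop : ⊤ ≤ Submodule.span ↥F (Set.range BB) := fun x _ => hWfield x
  let Bas : Module.Basis (Fin t → Fin p) ↥F L := basisOfTopLeSpanOfCardEqFinrank BB htop hcard
  have hBas : ∀ α, Bas α = BB α := fun α => by
    rw [coe_basisOfTopLeSpanOfCardEqFinrank]
  set dMon : Fin t → (Fin t → ℕ) → L := fun i n =>
    (n i : L) * Mon (Function.update n i (n i - 1)) with hdMon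
  let Di : Fin t → (L →ₗ[↥F] L) := fun i => Bas.constr ℕ (fun α => dMon i (fun j => (α j : ℕ)))
  have hDiBB : ∀ i α, Di i (BB α) = dMon i (fun j => (α j : ℕ)) := by
    intro i α
    rw [← hBas]
    exact Bas.constr_basis ℕ _ α
  have hprodMon : ∀ u v : Fin t → ℕ, Mon u * Mon v = Mon (fun j => u j + v j) := by
    intro u v
    rw [hMon]; simp only [pow_add]; rw [Finset.prod_mul_distrib]
  have hDi : ∀ i n, Di i (Mon n) = dMon i n := by
    intro i n
    have hsplit : Mon n = (⟨(Mon fun j => n j / p) ^ p, hFmem _⟩ : F) •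
        BB (fun j => ⟨n j % p, Nat.mod_lt _ hp0⟩) := by
      rw [hsmul]
      have := hMulSplit (fun j => n j / p) (fun j => n j % p)
      simp only [Nat.div_add_mod] at this
      exact this
    rw [hsplit, map_smul, hDiBB, hsmul]
    have hfix : (fun j => (((⟨n j % p, Nat.mod_lt _ hp0⟩ : Fin p)) : ℕ)) = fun j => n j % p := rfl
    rw [hfix]
    rcases Nat.eq_zero_or_pos (n i % p) with h0 | hpos
    · have h1 : dMon i (fun j => n j % p) = 0 := by
        rw [hdMon]; simp only [h0]; simp
      have h2 : dMon i n = 0 := by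
        rw [hdMon]
        have h3 : (n i : L) = 0 := by
          have hd := Nat.div_add_mod (n i) p
          have hni : n i = p * (n i / p) := by omega
          rw [hni]
          push_cast
          rw [CharP.cast_eq_zero L p]
          ring
        simp only [h3, zero_mul]
      rw [h1, h2, mul_zero]
    · rw [hdMon]
      simp only
      have hd := Nat.div_add_mod (n i) p
      have hcast : ((n i % p : ℕ) : L) = (n i : L) := by
        conv_rhs => rw [← Nat.div_add_mod (n i) p]
        push_cast
        rw [CharP.cast_eq_zero L p]
        ring
      have h3 : Function.update n i (n i - 1)
          = fun j => p * (n j / p) + (Function.update (fun j' => n j' % p) i (n i % p - 1)) j := by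
        funext j
        rcases eq_or_ne j i with rfl | hne
        · simp only [Function.update_self]
          omega
        · simp only [Function.update_of_ne hne]
          exact (Nat.div_add_mod (n j) p).symm
      rw [hcast, h3, hMulSplit]
      ring
  -- Leibniz rule on monomials
  have hbleib : ∀ i (n l : Fin t → ℕ), Di i (Mon n * Mon l)
      = Mon n * Di i (Mon l) + Mon l * Di i (Mon n) := by
    intro i n l
    have haux : ∀ n l : Fin t → ℕ,
        Mon n * dMon i l
          = (l i : L) * Mon (Function.update (fun j => n j + l j) i (n i + l i - 1)) := by
      intro n l
      rw [hdMon]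
      simp only
      rw [← mul_assoc, mul_comm (Mon n) ((l i : L)), mul_assoc, hprodMon]
      rcases Nat.eq_zero_or_pos (l i) with h0 | hpos
      · simp [h0]
      · congr 2
        funext j
        rcases eq_or_ne j i with rfl | hne
        · simp only [Function.update_self]
          omega
        · simp only [Function.update_of_ne hne]
    rw [hprodMon, hDi, hDi, hDi]
    rw [haux n l, haux l n]
    have h4 : (fun j => l j + n j) = fun j => n j + l j := by funext j; omega
    have h5 : l i + n i - 1 = n i + l i - 1 := by omega
    rw [h4, h5, hdMon]
    simp only
    push_cast
    ring
  -- Leibniz rule in general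
  have hleib : ∀ i (x y : L), Di i (x * y) = x * Di i y + y * Di i x := by
    intro i x y
    have key2 : ∀ u : L, u ∈ W → ∀ v : L, v ∈ W → Di i (u * v) = u * Di i v + v * Di i u := by
      intro u hu
      induction hu using Submodule.span_induction with
      | mem u hu =>
        obtain ⟨α, rfl⟩ := hu
        intro v hv
        induction hv using Submodule.span_induction with
        | mem v hv =>
          obtain ⟨β, rfl⟩ := hv
          exact hbleib i _ _
        | zero => simp
        | add v w hv hw ihv ihw =>
          rw [mul_add, map_add, map_add, ihv, ihw]
          ring
        | smul c v hv ihv =>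
          rw [mul_smul_comm, map_smul, map_smul, ihv, hsmul, hsmul, hsmul]
          ring
      | zero => intro v hv; simp
      | add u w hu hw ihu ihw =>
        intro v hv
        rw [add_mul, map_add, map_add, ihu v hv, ihw v hv]
        ring
      | smul c u hu ihu =>
        intro v hv
        rw [smul_mul_assoc, map_smul, map_smul, ihu v hv, hsmul, hsmul, hsmul]
        ring
    exact key2 x (hWfield x) y (hWfield y)
  -- bundle as derivations
  let der : Fin t → Derivation ℤ L L := fun i =>
    { toLinearMap := AddMonoidHom.toIntLinearMap (LinearMap.toAddMonoidHom (Di i))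
      map_one_eq_zero' := by
        show Di i 1 = 0
        have h1 : (1 : L) = Mon 0 := by simp [hMon]
        rw [h1, hDi, hdMon]
        simp
      leibniz' := by
        intro x y
        show Di i (x * y) = x • Di i y + y • Di i x
        rw [smul_eq_mul, smul_eq_mul]
        exact hleib i x y }
  have hder : ∀ i (x : L), der i x = Di i x := fun i x => rfl
  have hval : ∀ i j, der i (b j) = if i = j then 1 else 0 := by
    intro i j
    have h1 : b j = Mon (Pi.single j 1) := by
      show b j = ∏ i', b i' ^ (Pi.single j 1 i')
      rw [Finset.prod_eq_single j (fun i' _ hij => by simp [Pi.single_apply, hij])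
        (fun h => absurd (Finset.mem_univ j) h)]
      simp
    rw [hder, h1, hDi, hdMon]
    simp only
    rcases eq_or_ne i j with rfl | hne
    · rw [if_pos rfl]
      have h2 : Function.update (Pi.single i 1 : Fin t → ℕ) i ((Pi.single i 1 : Fin t → ℕ) i - 1) = fun _ => (0:ℕ) := by
        funext j'
        rcases eq_or_ne j' i with rfl | h
        · simp
        · simp [Function.update_of_ne h, Pi.single_apply, h]
      rw [h2]
      have h3 : Mon (fun _ => (0:ℕ)) = 1 := by rw [hMon]; simp
      rw [h3, Pi.single_eq_same]
      simp
    · have h4 : (Pi.single j 1 : Fin t → ℕ) i = 0 := by simp [Pi.single_apply, hne]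
      rw [if_neg hne, h4]
      simp
  set DD := KaehlerDifferential.D ℤ L with hDD
  have hDpow : ∀ y : L, DD (y ^ p) = 0 := by
    intro y
    rw [Derivation.leibniz_pow, ← Nat.cast_smul_eq_nsmul L, CharP.cast_eq_zero L p, zero_smul]
  have hdpow : ∀ i (y : L), der i (y ^ p) = 0 := by
    intro i y
    rw [Derivation.leibniz_pow, ← Nat.cast_smul_eq_nsmul L, CharP.cast_eq_zero L p, zero_smul]
  have hspanD : ∀ x : L, DD x = ∑ i, der i x • DD (b i) := by
    intro x
    let Sd : Subfield L :=
      { carrier := {z : L | DD z = ∑ i, der i z • DD (b i)}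
        mul_mem' := by
          intro u v hu hv
          simp only [Set.mem_setOf_eq] at hu hv ⊢
          rw [Derivation.leibniz, hu, hv, Finset.smul_sum, Finset.smul_sum,
            ← Finset.sum_add_distrib]
          refine Finset.sum_congr rfl fun i _ => ?_
          rw [Derivation.leibniz, smul_eq_mul, smul_eq_mul, add_smul, mul_smul, mul_smul]
        one_mem' := by
          simp only [Set.mem_setOf_eq]
          simp
        add_mem' := by
          intro u v hu hv
          simp only [Set.mem_setOf_eq] at hu hv ⊢
          rw [map_add, hu, hv, ← Finset.sum_add_distrib]
          refine Finset.sum_congr rfl fun i _ => ?_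
          rw [map_add, add_smul]
        zero_mem' := by
          simp only [Set.mem_setOf_eq]
          simp
        neg_mem' := by
          intro u hu
          simp only [Set.mem_setOf_eq] at hu ⊢
          rw [map_neg, hu]
          simp
        inv_mem' := by
          intro u hu
          simp only [Set.mem_setOf_eq] at hu ⊢
          rw [Derivation.leibniz_inv, hu, Finset.smul_sum]
          refine Finset.sum_congr rfl fun i _ => ?_
          rw [Derivation.leibniz_inv, smul_eq_mul, mul_smul] }
    have hgen : Set.range (frobenius L p) ∪ Set.range b ⊆ (Sd : Set L) := by
      rintro z (⟨y, rfl⟩ | ⟨j, rfl⟩)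
      · show DD (frobenius L p y) = ∑ i, der i (frobenius L p y) • DD (b i)
        rw [frobenius_def]
        simp [hDpow, hdpow]
      · show DD (b j) = ∑ i, der i (b j) • DD (b i)
        have : ∀ i, der i (b j) • DD (b i) = if i = j then DD (b i) else 0 := by
          intro i
          rw [hval i j]
          rcases eq_or_ne i j with rfl | hne
          · simp
          · simp [hne]
        rw [Finset.sum_congr rfl fun i _ => this i]
        simp
    exact Subfield.closure_le.mpr hgen (hspan x)
  exact ⟨der, hval, hspanD⟩

/-- An additive endomorphism of the exterior algebra of `Ω¹_F` is an exterior derivative if it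
sends `b·dc₁ ∧ ⋯ ∧ dc_d` to `db ∧ dc₁ ∧ ⋯ ∧ dc_d` for all `d`. -/
def IsExtDer (F : Type) [Field F]
    (d : ExteriorAlgebra F (KaehlerDifferential ℤ F) →+
         ExteriorAlgebra F (KaehlerDifferential ℤ F)) : Prop :=
  ∀ (m : ℕ) (b : F) (c : Fin m → F),
    d (b • ExteriorAlgebra.ιMulti F m fun i => KaehlerDifferential.D ℤ F (c i)) =
      ExteriorAlgebra.ιMulti F (m + 1)
        (Fin.cons (KaehlerDifferential.D ℤ F b) fun i => KaehlerDifferential.D ℤ F (c i))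

/-- Let `K` be a field of characteristic `p` with `p`-basis `a₁,…,a_r` over a
perfect subfield `k`, and `E ⊆ K` an intermediate field such that `a₁,…,a_m` (`m ≤ r`) form a
`p`-basis of `E` over `k`.  Then for every `n ≥ 0` the induced map
`Ω^n_E/Z^n_E → Ω^n_K/Z^n_K` is injective, where `Z^n` denotes the closed `n`-forms (kernels of
the exterior derivatives `dE`, `dK`): if an `n`-form over `E` maps to a closed form over `K`,
it is already closed over `E`. -/
theorem kaehler_nforms_mod_closed_injective_of_pBasis
    (p : ℕ) [Fact p.Prime] (K : Type) [Field K] [CharP K p]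
    (k E : Subfield K) [PerfectField ↥k] (hkE : k ≤ E)
    (r m : ℕ) (hmr : m ≤ r)
    (a : Fin r → K) (haE : ∀ i : Fin r, (i : ℕ) < m → a i ∈ E)
    (hbasisK : Subfield.closure ((k : Set K) ∪ Set.range (frobenius K p) ∪ Set.range a) = ⊤)
    (hdimK : Module.finrank (↥(frobenius K p).fieldRange) K = p ^ r)
    (hbasisE : (E : Set K) ⊆ Subfield.closure
      ((k : Set K) ∪ ((fun x : K => x ^ p) '' (E : Set K)) ∪ (a '' {i : Fin r | (i : ℕ) < m})))
    [CharP ↥E p]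
    (hdimE : Module.finrank (↥(frobenius ↥E p).fieldRange) ↥E = p ^ m)
    (φ : ExteriorAlgebra ↥E (KaehlerDifferential ℤ ↥E) →+
         ExteriorAlgebra K (KaehlerDifferential ℤ K))
    (hφ : ∀ (d : ℕ) (b : ↥E) (c : Fin d → ↥E),
      φ (b • ExteriorAlgebra.ιMulti ↥E d fun i => KaehlerDifferential.D ℤ ↥E (c i)) =
        (b : K) • ExteriorAlgebra.ιMulti K d fun i => KaehlerDifferential.D ℤ K ((c i : K)))
    (dE : ExteriorAlgebra ↥E (KaehlerDifferential ℤ ↥E) →+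
          ExteriorAlgebra ↥E (KaehlerDifferential ℤ ↥E))
    (hdE : IsExtDer ↥E dE)
    (dK : ExteriorAlgebra K (KaehlerDifferential ℤ K) →+
          ExteriorAlgebra K (KaehlerDifferential ℤ K))
    (hdK : IsExtDer K dK)
    (n : ℕ) (x : ExteriorAlgebra ↥E (KaehlerDifferential ℤ ↥E)) (hx : x ∈ nForms ↥E n) :
    dK (φ x) = 0 → dE x = 0 := by
  classical
  intro hdK0
  have hp : p.Prime := Fact.out
  have hp0 : 0 < p := hp.pos
  -- every element of k is a p-th power of an element of k
  haveI : CharP ↥k p := RingHom.charP k.subtype Subtype.val_injective p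
  haveI : ExpChar ↥k p := ExpChar.prime hp
  have hkp : ∀ c ∈ k, ∃ e ∈ k, e ^ p = c := by
    intro c hc
    obtain ⟨y, hy⟩ := surjective_frobenius ↥k p ⟨c, hc⟩
    refine ⟨(y : K), y.2, ?_⟩
    have := congrArg (Subtype.val : ↥k → K) hy
    push_cast at this
    rw [← this]
    push_cast
    rfl
  -- the spanning hypothesis for K
  have hspanK : ∀ x : K, x ∈ Subfield.closure (Set.range (frobenius K p) ∪ Set.range a) := by
    intro x
    have hsub : ((k : Set K) ∪ Set.range (frobenius K p) ∪ Set.range a)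
        ⊆ (Subfield.closure (Set.range (frobenius K p) ∪ Set.range a) : Set K) := by
      intro z hz
      rcases hz with (hz | hz) | hz
      · obtain ⟨e, he, hep⟩ := hkp z hz
        exact Subfield.subset_closure (Or.inl ⟨e, by rw [frobenius_def]; exact hep⟩)
      · exact Subfield.subset_closure (Or.inl hz)
      · exact Subfield.subset_closure (Or.inr hz)
    have h2 := Subfield.closure_le.mpr hsub
    rw [hbasisK] at h2
    exact h2 (Subfield.mem_top x)
  -- the p-basis of E
  let aE : Fin m → ↥E := fun i => ⟨a (Fin.castLE hmr i), haE (Fin.castLE hmr i) i.isLt⟩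
  have hspanE : ∀ x : ↥E, x ∈ Subfield.closure (Set.range (frobenius ↥E p) ∪ Set.range aE) := by
    intro x
    set C : Subfield ↥E := Subfield.closure (Set.range (frobenius ↥E p) ∪ Set.range aE) with hC
    have hgen : ((k : Set K) ∪ ((fun x : K => x ^ p) '' (E : Set K)) ∪ (a '' {i : Fin r | (i : ℕ) < m}))
        ⊆ ((C.map E.subtype : Subfield K) : Set K) := by
      intro z hz
      rcases hz with (hz | hz) | hz
      · obtain ⟨e, he, hep⟩ := hkp z hz
        have heE : e ∈ E := hkE he
        have hzE : z ∈ E := hkE hz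
        refine ⟨⟨z, hzE⟩, ?_, rfl⟩
        have : (⟨z, hzE⟩ : ↥E) = frobenius ↥E p ⟨e, heE⟩ := by
          apply Subtype.ext
          rw [frobenius_def]
          push_cast
          exact hep.symm
        rw [this]
        exact Subfield.subset_closure (Or.inl ⟨_, rfl⟩)
      · obtain ⟨y, hy, rfl⟩ := hz
        have hzE : y ^ p ∈ E := pow_mem hy p
        refine ⟨⟨y ^ p, hzE⟩, ?_, rfl⟩
        have : (⟨y ^ p, hzE⟩ : ↥E) = frobenius ↥E p ⟨y, hy⟩ := by
          apply Subtype.ext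
          rw [frobenius_def]
          push_cast
          rfl
        rw [this]
        exact Subfield.subset_closure (Or.inl ⟨_, rfl⟩)
      · obtain ⟨i, hi, rfl⟩ := hz
        have hiE : a i ∈ E := haE i hi
        refine ⟨⟨a i, hiE⟩, ?_, rfl⟩
        have : (⟨a i, hiE⟩ : ↥E) = aE ⟨(i : ℕ), hi⟩ := by
          apply Subtype.ext
          show a i = a (Fin.castLE hmr ⟨(i : ℕ), hi⟩)
          rfl
        rw [this]
        exact Subfield.subset_closure (Or.inr ⟨_, rfl⟩)
    have hx : (x : K) ∈ C.map E.subtype := Subfield.closure_le.mpr hgen (hbasisE x.2)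
    obtain ⟨y, hy, hyx⟩ := hx
    have : y = x := Subtype.ext hyx
    rwa [this] at hy
  -- derivations
  obtain ⟨derK, hvalK, hDK⟩ := exists_pderivs p K r a hspanK hdimK
  obtain ⟨derE, hvalE, hDE⟩ := exists_pderivs p ↥E m aE hspanE hdimE
  -- compatibility of derivations
  have hKpow : ∀ (i : Fin r) (y : K), derK i (y ^ p) = 0 := by
    intro i y
    rw [Derivation.leibniz_pow, ← Nat.cast_smul_eq_nsmul K, CharP.cast_eq_zero K p, zero_smul]
  have hEpow : ∀ (i : Fin m) (y : ↥E), derE i (y ^ p) = 0 := by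
    intro i y
    rw [Derivation.leibniz_pow, ← Nat.cast_smul_eq_nsmul ↥E, CharP.cast_eq_zero ↥E p, zero_smul]
  have hcompat : ∀ (i : Fin m) (x : ↥E),
      derK (Fin.castLE hmr i) (x : K) = ((derE i x : ↥E) : K) := by
    have main : ∀ z : K, z ∈ Subfield.closure ((k : Set K) ∪ ((fun x : K => x ^ p) '' (E : Set K))
        ∪ (a '' {i : Fin r | (i : ℕ) < m})) →
        ∃ h : z ∈ E, ∀ i : Fin m, derK (Fin.castLE hmr i) z = ((derE i ⟨z, h⟩ : ↥E) : K) := by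
      have hT : ∀ u v : K, (∃ h : u ∈ E, ∀ i : Fin m,
          derK (Fin.castLE hmr i) u = ((derE i ⟨u, h⟩ : ↥E) : K)) →
          (∃ h : v ∈ E, ∀ i : Fin m,
          derK (Fin.castLE hmr i) v = ((derE i ⟨v, h⟩ : ↥E) : K)) → True := fun _ _ _ _ => trivial
      clear hT
      let T : Subfield K :=
        { carrier := {z : K | ∃ h : z ∈ E, ∀ i : Fin m,
            derK (Fin.castLE hmr i) z = ((derE i ⟨z, h⟩ : ↥E) : K)}
          one_mem' := ⟨E.one_mem, fun i => by
            show derK (Fin.castLE hmr i) 1 = ((derE i 1 : ↥E) : K)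
            rw [Derivation.map_one_eq_zero, Derivation.map_one_eq_zero]
            simp⟩
          mul_mem' := by
            rintro u v ⟨hu, hdu⟩ ⟨hv, hdv⟩
            refine ⟨E.mul_mem hu hv, fun i => ?_⟩
            show derK (Fin.castLE hmr i) (u * v) = ((derE i (⟨u, hu⟩ * ⟨v, hv⟩) : ↥E) : K)
            rw [Derivation.leibniz, Derivation.leibniz, smul_eq_mul, smul_eq_mul,
              smul_eq_mul, smul_eq_mul, hdu i, hdv i]
            push_cast
            ring
          add_mem' := by
            rintro u v ⟨hu, hdu⟩ ⟨hv, hdv⟩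
            refine ⟨E.add_mem hu hv, fun i => ?_⟩
            show derK (Fin.castLE hmr i) (u + v) = ((derE i (⟨u, hu⟩ + ⟨v, hv⟩) : ↥E) : K)
            rw [map_add, map_add, hdu i, hdv i]
            push_cast
            ring
          zero_mem' := ⟨E.zero_mem, fun i => by
            show derK (Fin.castLE hmr i) 0 = ((derE i 0 : ↥E) : K)
            rw [map_zero, map_zero]
            simp⟩
          neg_mem' := by
            rintro u ⟨hu, hdu⟩
            refine ⟨E.neg_mem hu, fun i => ?_⟩
            show derK (Fin.castLE hmr i) (-u) = ((derE i (-⟨u, hu⟩) : ↥E) : K)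
            rw [map_neg, map_neg, hdu i]
            push_cast
            ring
          inv_mem' := by
            rintro u ⟨hu, hdu⟩
            refine ⟨E.inv_mem hu, fun i => ?_⟩
            show derK (Fin.castLE hmr i) u⁻¹ = ((derE i (⟨u, hu⟩⁻¹) : ↥E) : K)
            rw [Derivation.leibniz_inv, Derivation.leibniz_inv, smul_eq_mul, smul_eq_mul,
              hdu i]
            push_cast
            ring }
      have hgenT : ((k : Set K) ∪ ((fun x : K => x ^ p) '' (E : Set K))
          ∪ (a '' {i : Fin r | (i : ℕ) < m})) ⊆ (T : Set K) := by
        rintro z hz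
        rcases hz with (hz | hz) | hz
        · obtain ⟨e, he, hep⟩ := hkp z hz
          have hzE : z ∈ E := hkE hz
          refine ⟨hzE, fun i => ?_⟩
          have h2 : (⟨z, hzE⟩ : ↥E) = (⟨e, hkE he⟩ : ↥E) ^ p := by
            apply Subtype.ext
            push_cast
            exact hep.symm
          rw [h2, hEpow, ← hep, hKpow]
          simp
        · obtain ⟨y, hy, rfl⟩ := hz
          have hzE : y ^ p ∈ E := pow_mem hy p
          refine ⟨hzE, fun i => ?_⟩
          have h2 : (⟨y ^ p, hzE⟩ : ↥E) = (⟨y, hy⟩ : ↥E) ^ p := by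
            apply Subtype.ext
            push_cast
            rfl
          rw [h2, hEpow, hKpow]
          simp
        · obtain ⟨i, hi, rfl⟩ := hz
          refine ⟨haE i hi, fun i' => ?_⟩
          have h2 : (⟨a i, haE i hi⟩ : ↥E) = aE ⟨(i : ℕ), hi⟩ := by
            apply Subtype.ext
            show a i = a (Fin.castLE hmr ⟨(i : ℕ), hi⟩)
            rfl
          rw [h2, hvalK, hvalE]
          rcases eq_or_ne ((i' : ℕ)) ((i : ℕ)) with hee | hne
          · rw [if_pos (Fin.ext (show ((Fin.castLE hmr i' : Fin r) : ℕ) = (i : ℕ) from hee)),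
              if_pos (Fin.ext (show ((i' : Fin m) : ℕ) = ((⟨(i : ℕ), hi⟩ : Fin m) : ℕ) from hee))]
            simp
          · rw [if_neg (fun hcon => hne (by simpa using congrArg Fin.val hcon)),
              if_neg (fun hcon => hne (by simpa using congrArg Fin.val hcon))]
            simp
      intro z hz
      exact Subfield.closure_le.mpr hgenT hz
    intro i x
    obtain ⟨h, hall⟩ := main (x : K) (hbasisE x.2)
    have h3 : (⟨(x : K), h⟩ : ↥E) = x := Subtype.ext rfl
    rw [hall i, h3]
  -- linear maps on Kaehler differentials given by the derivations
  let DerKpi : Derivation ℤ K (Fin r → K) :=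
    { toLinearMap := LinearMap.pi (fun i => ((derK i).toLinearMap : K →ₗ[ℤ] K))
      map_one_eq_zero' := by
        show (fun i => derK i 1) = 0
        funext i
        simp
      leibniz' := by
        intro x y
        funext i
        show derK i (x * y) = (x • (fun i => derK i y) + y • (fun i => derK i x)) i
        rw [Derivation.leibniz]
        simp [smul_eq_mul] }
  let DerEpi : Derivation ℤ ↥E (Fin m → ↥E) :=
    { toLinearMap := LinearMap.pi (fun i => ((derE i).toLinearMap : ↥E →ₗ[ℤ] ↥E))
      map_one_eq_zero' := by
        show (fun i => derE i 1) = 0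
        funext i
        simp
      leibniz' := by
        intro x y
        funext i
        show derE i (x * y) = (x • (fun i => derE i y) + y • (fun i => derE i x)) i
        rw [Derivation.leibniz]
        simp [smul_eq_mul] }
  let tK : KaehlerDifferential ℤ K →ₗ[K] (Fin r → K) := DerKpi.liftKaehlerDifferential
  let tE : KaehlerDifferential ℤ ↥E →ₗ[↥E] (Fin m → ↥E) := DerEpi.liftKaehlerDifferential
  have htK : ∀ x : K, tK (KaehlerDifferential.D ℤ K x) = fun i => derK i x := by
    intro x
    exact Derivation.liftKaehlerDifferential_comp_D DerKpi x
  have htE : ∀ x : ↥E, tE (KaehlerDifferential.D ℤ ↥E x) = fun i => derE i x := by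
    intro x
    exact Derivation.liftKaehlerDifferential_comp_D DerEpi x
  -- the coordinate functionals
  let emb : {S : Finset (Fin m) // S.card = n + 1} → (Fin (n + 1) → Fin m) :=
    fun S j => S.1.orderEmbOfFin S.2 j
  let lamE : {S : Finset (Fin m) // S.card = n + 1} →
      (ExteriorAlgebra ↥E (KaehlerDifferential ℤ ↥E) →ₗ[↥E] ↥E) := fun S =>
    ExteriorAlgebra.liftAlternating (Function.update
      (0 : ∀ i : ℕ, (KaehlerDifferential ℤ ↥E) [⋀^Fin i]→ₗ[↥E] ↥E) (n + 1)
      (Matrix.detRowAlternating.compLinearMap ((LinearMap.funLeft ↥E ↥E (emb S)).comp tE)))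
  let lamK : {S : Finset (Fin m) // S.card = n + 1} →
      (ExteriorAlgebra K (KaehlerDifferential ℤ K) →ₗ[K] K) := fun S =>
    ExteriorAlgebra.liftAlternating (Function.update
      (0 : ∀ i : ℕ, (KaehlerDifferential ℤ K) [⋀^Fin i]→ₗ[K] K) (n + 1)
      (Matrix.detRowAlternating.compLinearMap
        ((LinearMap.funLeft K K (fun j => Fin.castLE hmr (emb S j))).comp tK)))
  have hlamEgen : ∀ S (b : ↥E) (c : Fin (n + 1) → ↥E),
      lamE S (b • ExteriorAlgebra.ιMulti ↥E (n + 1) fun j => KaehlerDifferential.D ℤ ↥E (c j))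
        = b * Matrix.det (Matrix.of fun j j' => derE (emb S j') (c j)) := by
    intro S b c
    rw [map_smul, smul_eq_mul]
    congr 1
    rw [ExteriorAlgebra.liftAlternating_apply_ιMulti, Function.update_self,
      AlternatingMap.compLinearMap_apply]
    have h1 : (fun j => ((LinearMap.funLeft ↥E ↥E (emb S)).comp tE)
        (KaehlerDifferential.D ℤ ↥E (c j)))
        = fun j j' => derE (emb S j') (c j) := by
      funext j
      rw [LinearMap.comp_apply, htE]
      rfl
    rw [h1]
    rfl
  have hlamKgen : ∀ S (b : K) (c : Fin (n + 1) → K),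
      lamK S (b • ExteriorAlgebra.ιMulti K (n + 1) fun j => KaehlerDifferential.D ℤ K (c j))
        = b * Matrix.det (Matrix.of fun j j' => derK (Fin.castLE hmr (emb S j')) (c j)) := by
    intro S b c
    rw [map_smul, smul_eq_mul]
    congr 1
    rw [ExteriorAlgebra.liftAlternating_apply_ιMulti, Function.update_self,
      AlternatingMap.compLinearMap_apply]
    have h1 : (fun j => ((LinearMap.funLeft K K (fun j => Fin.castLE hmr (emb S j))).comp tK)
        (KaehlerDifferential.D ℤ K (c j)))
        = fun j j' => derK (Fin.castLE hmr (emb S j')) (c j) := by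
      funext j
      rw [LinearMap.comp_apply, htK]
      rfl
    rw [h1]
    rfl
  -- φ commutes with the exterior derivatives on nForms
  have hcomm : ∀ z ∈ nForms ↥E n, φ (dE z) = dK (φ z) := by
    intro z hz
    induction hz using AddSubgroup.closure_induction with
    | mem w hw =>
      obtain ⟨b, c, rfl⟩ := hw
      rw [hdE n b c, hφ n b c, hdK n (b : K) (fun i => (c i : K))]
      have h1 : (Fin.cons (KaehlerDifferential.D ℤ ↥E b)
          fun i => KaehlerDifferential.D ℤ ↥E (c i))
          = fun i : Fin (n + 1) => KaehlerDifferential.D ℤ ↥E ((Fin.cons b c : Fin (n+1) → ↥E) i) := by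
        funext i
        refine Fin.cases rfl (fun j => rfl) i
      rw [h1]
      have h2 := hφ (n + 1) 1 (Fin.cons b c)
      rw [one_smul] at h2
      rw [h2]
      have h3 : (fun i : Fin (n + 1) => KaehlerDifferential.D ℤ K (((Fin.cons b c : Fin (n+1) → ↥E) i : ↥E) : K))
          = Fin.cons (KaehlerDifferential.D ℤ K ((b : ↥E) : K))
              (fun i => KaehlerDifferential.D ℤ K ((c i : ↥E) : K)) := by
        funext i
        refine Fin.cases rfl (fun j => rfl) i
      rw [h3, OneMemClass.coe_one, one_smul]
    | zero => simp
    | add z1 z2 h1 h2 ih1 ih2 => rw [map_add, map_add, map_add, map_add, ih1, ih2]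
    | neg z1 h1 ih1 => rw [map_neg, map_neg, map_neg, map_neg, ih1]
  -- dE z lies in (n+1)-forms
  have hmem : ∀ z ∈ nForms ↥E n, dE z ∈ nForms ↥E (n + 1) := by
    intro z hz
    induction hz using AddSubgroup.closure_induction with
    | mem w hw =>
      obtain ⟨b, c, rfl⟩ := hw
      rw [hdE n b c]
      refine AddSubgroup.subset_closure ⟨1, Fin.cons b c, ?_⟩
      rw [one_smul]
      congr 1
      funext i
      refine Fin.cases rfl (fun j => rfl) i
    | zero => rw [map_zero]; exact (nForms ↥E (n + 1)).zero_mem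
    | add z1 z2 h1 h2 ih1 ih2 => rw [map_add]; exact (nForms ↥E (n + 1)).add_mem ih1 ih2
    | neg z1 h1 ih1 => rw [map_neg]; exact (nForms ↥E (n + 1)).neg_mem ih1
  -- compatibility of the functionals
  have hlamcompat : ∀ z ∈ nForms ↥E (n + 1), ∀ S,
      ((lamE S z : ↥E) : K) = lamK S (φ z) := by
    intro z hz
    induction hz using AddSubgroup.closure_induction with
    | mem w hw =>
      obtain ⟨b, c, rfl⟩ := hw
      intro S
      rw [hφ, hlamKgen, hlamEgen]
      have hA : (Matrix.of fun j j' => derK (Fin.castLE hmr (emb S j')) ((c j : K)))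
          = (E.subtype : ↥E →+* K).mapMatrix (Matrix.of fun j j' => derE (emb S j') (c j)) := by
        ext j j'
        rw [RingHom.mapMatrix_apply, Matrix.map_apply]
        exact hcompat (emb S j') (c j)
      rw [hA, ← RingHom.map_det]
      push_cast
      rfl
    | zero => intro S; simp
    | add z1 z2 h1 h2 ih1 ih2 =>
      intro S
      rw [map_add, map_add, map_add]
      push_cast
      rw [ih1 S, ih2 S]
    | neg z1 h1 ih1 =>
      intro S
      rw [map_neg, map_neg, map_neg]
      push_cast
      rw [ih1 S]
  -- reconstruction of a form from its coordinates
  have hrecon : ∀ z ∈ nForms ↥E (n + 1),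
      z = ∑ S : {S : Finset (Fin m) // S.card = n + 1}, lamE S z •
        ExteriorAlgebra.ιMulti ↥E (n + 1) (fun j => KaehlerDifferential.D ℤ ↥E (aE (emb S j))) := by
    intro z hz
    induction hz using AddSubgroup.closure_induction with
    | mem w hw =>
      obtain ⟨b, c, rfl⟩ := hw
      have hexp := alt_expand (ExteriorAlgebra.ιMulti ↥E (n + 1))
        (fun i => KaehlerDifferential.D ℤ ↥E (aE i)) (Matrix.of fun j i => derE i (c j))
      have h0 : (fun j : Fin (n + 1) => ∑ i, (Matrix.of fun j i => derE i (c j)) j i •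
          KaehlerDifferential.D ℤ ↥E (aE i))
          = fun j => KaehlerDifferential.D ℤ ↥E (c j) := by
        funext j
        simp only [Matrix.of_apply]
        rw [← hDE (c j)]
      conv_lhs => rw [← h0, hexp]
      rw [Finset.smul_sum]
      refine Finset.sum_congr rfl fun S _ => ?_
      rw [hlamEgen, mul_smul]
      rfl
    | zero => simp
    | add z1 z2 h1 h2 ih1 ih2 =>
      conv_lhs => rw [ih1, ih2]
      rw [← Finset.sum_add_distrib]
      refine Finset.sum_congr rfl fun S _ => ?_
      rw [map_add, add_smul]
    | neg z1 h1 ih1 =>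
      conv_lhs => rw [ih1]
      rw [← Finset.sum_neg_distrib]
      refine Finset.sum_congr rfl fun S _ => ?_
      rw [map_neg, neg_smul]
  -- conclusion
  have h1 : φ (dE x) = 0 := by rw [hcomm x hx]; exact hdK0
  have h2 : dE x ∈ nForms ↥E (n + 1) := hmem x hx
  have h3 : ∀ S, lamE S (dE x) = 0 := by
    intro S
    have h4 := hlamcompat (dE x) h2 S
    rw [h1, map_zero] at h4
    exact Subtype.coe_injective (by simpa using h4)
  have h5 := hrecon (dE x) h2
  rw [h5]
  exact Finset.sum_eq_zero fun S _ => by rw [h3 S, zero_smul]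
end

section
/- Let E be a field of characteristic p that is C_r (every homogeneous form of degree d in more than d^r variables has a nontrivial zero) with r < n+1. Then the Milne–Kato cohomology group H^{n+1}_p(E) is zero. In particular, if k is algebraically closed of characteristic p and E/k is a field extension of transcendence degree less than n+1, then H^{n+1}_p(E) = 0. -/
set_option synthInstance.maxHeartbeats 400000
set_option maxHeartbeats 1000000

/-- The subgroup of `n`-forms by which one quotients to obtain `H^{n+1}_p(F)`:
it is generated by the exact forms `dc₀ ∧ dc₁ ∧ ⋯ ∧ dc_{n-1} ∈ dΩ^{n-1}` and by the image of
the Artin–Schreier–Kato operator, `(a^p − a)·(db₁/b₁) ∧ ⋯ ∧ (db_n/b_n)`. -/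
noncomputable def hRel (p : ℕ) (F : Type) [Field F] (n : ℕ) :
    AddSubgroup (ExteriorAlgebra F (KaehlerDifferential ℤ F)) :=
  AddSubgroup.closure
    ({x | ∃ c : Fin n → F,
        x = ExteriorAlgebra.ιMulti F n fun i => KaehlerDifferential.D ℤ F (c i)} ∪
     {x | ∃ (a : F) (b : Fin n → F), (∀ i, b i ≠ 0) ∧
        x = (a ^ p - a) • ExteriorAlgebra.ιMulti F n
          fun i => (b i)⁻¹ • KaehlerDifferential.D ℤ F (b i)})


open Function Finset

section Dlog
variable (p : ℕ) [Fact p.Prime] {E : Type} [Field E] [CharP E p]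

local notation "Ω" => KaehlerDifferential ℤ E
local notation "D" => KaehlerDifferential.D ℤ E

noncomputable def dlog (x : E) : KaehlerDifferential ℤ E := x⁻¹ • D x

variable {p}

lemma D_pow_p (c : E) : D (c ^ p) = 0 := by
  rw [Derivation.leibniz_pow, ← Nat.cast_smul_eq_nsmul E, CharP.cast_eq_zero E p, zero_smul]

lemma smul_dlog {x : E} (hx : x ≠ 0) : x • dlog x = D x := by
  rw [dlog, smul_smul, mul_inv_cancel₀ hx, one_smul]

lemma dlog_one : dlog (1 : E) = 0 := by
  rw [dlog, Derivation.map_one_eq_zero, smul_zero]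

lemma dlog_mul {x y : E} (hx : x ≠ 0) (hy : y ≠ 0) : dlog (x * y) = dlog x + dlog y := by
  rw [dlog, dlog, dlog, Derivation.leibniz, mul_inv, smul_add, smul_smul, smul_smul]
  have h1 : x⁻¹ * y⁻¹ * x = y⁻¹ := by rw [mul_comm x⁻¹ y⁻¹, mul_assoc, inv_mul_cancel₀ hx, mul_one]
  have h2 : x⁻¹ * y⁻¹ * y = x⁻¹ := by rw [mul_assoc, inv_mul_cancel₀ hy, mul_one]
  rw [h1, h2]; abel


lemma dlog_pow (m : ℕ) {x : E} (hx : x ≠ 0) : dlog (x ^ m) = m • dlog x := by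
  induction m with
  | zero => simp [dlog_one]
  | succ k ih => rw [pow_succ, dlog_mul (pow_ne_zero k hx) hx, ih, succ_nsmul]

lemma dlog_prod {κ : Type*} (s : Finset κ) (f : κ → E) (h : ∀ k ∈ s, f k ≠ 0) :
    dlog (∏ k ∈ s, f k) = ∑ k ∈ s, dlog (f k) := by
  classical
  induction s using Finset.induction_on with
  | empty => simp [dlog_one]
  | insert _ _ hk ih =>
    rename_i a s
    rw [Finset.prod_insert hk, Finset.sum_insert hk,
      dlog_mul (h a (mem_insert_self a s)) (Finset.prod_ne_zero_iff.2 fun b hb => h b (mem_insert_of_mem hb)),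
      ih fun b hb => h b (mem_insert_of_mem hb)]

lemma dlog_pow_p (c : E) : dlog (c ^ p) = 0 := by rw [dlog, D_pow_p, smul_zero]

lemma dlog_inv (x : E) : dlog x⁻¹ = - dlog x := by
  rcases eq_or_ne x 0 with rfl | hx
  · simp [dlog]
  · have := dlog_mul hx (inv_ne_zero hx)
    rw [mul_inv_cancel₀ hx, dlog_one] at this
    exact eq_neg_of_add_eq_zero_right this.symm
end Dlog

section DepA
variable {p : ℕ} [Fact p.Prime] {E : Type} [Field E] [CharP E p]

local notation "Ω" => KaehlerDifferential ℤ E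
local notation "D" => KaehlerDifferential.D ℤ E

lemma natCast_pow_p (m : ℕ) : ((m : E)) ^ p = (m : E) := by
  have h : ((m ^ p : ℕ) : ZMod p) = ((m : ℕ) : ZMod p) := by
    push_cast
    exact ZMod.pow_card _
  have h2 : m ^ p ≡ m [MOD p] := (ZMod.natCast_eq_natCast_iff _ _ _).mp h
  rw [← Nat.cast_pow]
  exact (CharP.natCast_eq_natCast E p).mpr h2

lemma depA_aux {n : ℕ} (b : Fin (n + 1) → E) (hb : ∀ i, b i ≠ 0)
    (hg : LinearIndependent E fun i => dlog (b i))
    (IH : ∀ lam0 : (Fin n → Fin p) → E,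
      (∑ J : Fin n → Fin p, lam0 J ^ p * ∏ k, b k.succ ^ (J k : ℕ)) = 0 → ∀ J, lam0 J = 0) :
    ∀ m, m ≤ p → ∀ lam : ℕ → (Fin n → Fin p) → E,
      (∑ i ∈ Finset.range m, ∑ J : Fin n → Fin p,
        lam i J ^ p * (b 0 ^ i * ∏ k, b k.succ ^ (J k : ℕ))) = 0 →
      ∀ i < m, lam i = 0 := by
  have hp : 0 < p := (Fact.out : p.Prime).pos
  intro m
  induction m with
  | zero => intro _ _ _ i hi; exact absurd hi (Nat.not_lt_zero i)
  | succ m ihm =>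
    intro hm lam hrel
    set T : ℕ → (Fin n → Fin p) → E := fun i J => b 0 ^ i * ∏ k, b k.succ ^ (J k : ℕ) with hT
    have hTne : ∀ i J, T i J ≠ 0 := fun i J =>
      mul_ne_zero (pow_ne_zero _ (hb 0))
        (Finset.prod_ne_zero_iff.2 fun k _ => pow_ne_zero _ (hb k.succ))
    have hdlogT : ∀ i J, dlog (T i J) =
        (i : ℕ) • dlog (b 0) + ∑ k, (J k : ℕ) • dlog (b k.succ) := by
      intro i J
      rw [hT]
      rw [dlog_mul (pow_ne_zero _ (hb 0))
        (Finset.prod_ne_zero_iff.2 fun k _ => pow_ne_zero _ (hb k.succ)),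
        dlog_pow _ (hb 0), dlog_prod _ _ (fun k _ => pow_ne_zero _ (hb k.succ))]
      congr 1
      exact Finset.sum_congr rfl fun k _ => dlog_pow _ (hb k.succ)
    -- differentiate the relation
    have hD0 : ∑ j : Fin (n + 1),
        (∑ i ∈ Finset.range (m + 1), ∑ J : Fin n → Fin p,
          lam i J ^ p * T i J * (Fin.cases (i : E) (fun k => (J k : E)) j)) • dlog (b j)
        = 0 := by
      have h1 : D (∑ i ∈ Finset.range (m + 1), ∑ J : Fin n → Fin p,
          lam i J ^ p * T i J) = 0 := by rw [hrel]; exact map_zero _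
      rw [map_sum] at h1
      simp_rw [map_sum] at h1
      have h2 : ∀ i ∈ Finset.range (m+1), ∀ J : Fin n → Fin p,
          D (lam i J ^ p * T i J) =
          ∑ j : Fin (n+1), (lam i J ^ p * T i J *
            (Fin.cases (i : E) (fun k => (J k : E)) j)) • dlog (b j) := by
        intro i _ J
        rw [Derivation.leibniz, D_pow_p, smul_zero, add_zero, ← smul_dlog (hTne i J),
          smul_smul, hdlogT, Fin.sum_univ_succ]
        rw [smul_add, Finset.smul_sum]
        simp_rw [← Nat.cast_smul_eq_nsmul E, smul_smul]
        simp [mul_assoc]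
      calc ∑ j : Fin (n + 1), (∑ i ∈ Finset.range (m + 1), ∑ J : Fin n → Fin p,
            lam i J ^ p * T i J * (Fin.cases (i : E) (fun k => (J k : E)) j)) • dlog (b j)
          = ∑ i ∈ Finset.range (m + 1), ∑ J : Fin n → Fin p,
            ∑ j : Fin (n + 1), (lam i J ^ p * T i J *
              (Fin.cases (i : E) (fun k => (J k : E)) j)) • dlog (b j) := by
            simp_rw [Finset.sum_smul]
            rw [Finset.sum_comm]
            exact Finset.sum_congr rfl fun i _ => Finset.sum_comm
        _ = ∑ i ∈ Finset.range (m + 1), ∑ J : Fin n → Fin p,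
              D (lam i J ^ p * T i J) := by
            refine Finset.sum_congr rfl fun i hi => Finset.sum_congr rfl fun J _ =>
              (h2 i hi J).symm
        _ = 0 := h1
    have hcoef := Fintype.linearIndependent_iff.mp hg _ hD0
    have hc0 : ∑ i ∈ Finset.range (m + 1), ∑ J : Fin n → Fin p,
        lam i J ^ p * T i J * (i : E) = 0 := by simpa using hcoef 0
    -- the shifted relation
    set lam' : ℕ → (Fin n → Fin p) → E := fun i J => ((i + 1 : ℕ) : E) * lam (i+1) J with hlam'
    have hrel' : ∑ i ∈ Finset.range m, ∑ J : Fin n → Fin p, lam' i J ^ p * T i J = 0 := by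
      have hmul : b 0 * (∑ i ∈ Finset.range m, ∑ J : Fin n → Fin p, lam' i J ^ p * T i J) =
          ∑ i ∈ Finset.range m, ∑ J : Fin n → Fin p,
            lam (i+1) J ^ p * T (i+1) J * ((i+1 : ℕ) : E) := by
        rw [Finset.mul_sum]
        refine Finset.sum_congr rfl fun i _ => ?_
        rw [Finset.mul_sum]
        refine Finset.sum_congr rfl fun J _ => ?_
        have hTs : T (i+1) J = b 0 * T i J := by
          simp only [hT, pow_succ]; ring
        simp only [hlam']
        rw [mul_pow, natCast_pow_p, hTs]
        ring
      have h0 : ∑ i ∈ Finset.range m, ∑ J : Fin n → Fin p,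
          lam (i+1) J ^ p * T (i+1) J * ((i+1 : ℕ) : E) = 0 := by
        rw [Finset.sum_range_succ'] at hc0
        have hz : ∑ J : Fin n → Fin p, lam 0 J ^ p * T 0 J * ((0:ℕ) : E) = 0 := by
          simp
        rw [hz, add_zero] at hc0
        exact hc0
      rw [h0] at hmul
      exact (mul_eq_zero.mp hmul).resolve_left (hb 0)
    have hsh := ihm (Nat.le_of_succ_le hm) lam' hrel'
    have hpos : ∀ i, 0 < i → i < m + 1 → lam i = 0 := by
      intro i hi0 him
      obtain ⟨i', rfl⟩ : ∃ i', i = i' + 1 := ⟨i - 1, by omega⟩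
      have h1 := hsh i' (by omega)
      funext J
      have h2 : ((i' + 1 : ℕ) : E) * lam (i'+1) J = 0 := by
        have := congrFun h1 J
        simpa only [hlam', Pi.zero_apply] using this
      have h3 : ((i' + 1 : ℕ) : E) ≠ 0 := by
        rw [Ne, CharP.cast_eq_zero_iff E p]
        exact Nat.not_dvd_of_pos_of_lt (Nat.succ_pos i') (by omega)
      exact (mul_eq_zero.mp h2).resolve_left h3
    have hzero : lam 0 = 0 := by
      rw [Finset.sum_range_succ'] at hrel
      have hz : ∑ i ∈ Finset.range m, ∑ J : Fin n → Fin p,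
          lam (i+1) J ^ p * T (i+1) J = 0 := by
        refine Finset.sum_eq_zero fun i hi => Finset.sum_eq_zero fun J _ => ?_
        have hilt := Finset.mem_range.mp hi
        rw [hpos (i+1) (Nat.succ_pos i) (by omega), Pi.zero_apply,
          zero_pow hp.ne', zero_mul]
      rw [hz, zero_add] at hrel
      have hz2 : ∀ J : Fin n → Fin p, T 0 J = ∏ k, b k.succ ^ (J k : ℕ) := by
        intro J; simp only [hT, pow_zero, one_mul]
      have hrel0 : ∑ J : Fin n → Fin p, lam 0 J ^ p * ∏ k, b k.succ ^ (J k : ℕ) = 0 := by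
        calc ∑ J : Fin n → Fin p, lam 0 J ^ p * ∏ k, b k.succ ^ (J k : ℕ)
            = ∑ J : Fin n → Fin p, lam 0 J ^ p * T 0 J :=
              Finset.sum_congr rfl fun J _ => by rw [hz2 J]
          _ = 0 := hrel
      exact funext (IH (lam 0) hrel0)
    intro i hi
    rcases Nat.eq_zero_or_pos i with rfl | hi0
    · exact hzero
    · exact hpos i hi0 hi
end DepA

section DepA2
variable {p : ℕ} [Fact p.Prime] {E : Type} [Field E] [CharP E p]

lemma depA : ∀ (n : ℕ) (b : Fin n → E), (∀ i, b i ≠ 0) →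
    (LinearIndependent E fun i => dlog (b i)) →
    ∀ lam : (Fin n → Fin p) → E,
      (∑ I : Fin n → Fin p, lam I ^ p * ∏ k, b k ^ (I k : ℕ)) = 0 → ∀ I, lam I = 0 := by
  have hp : 0 < p := (Fact.out : p.Prime).pos
  intro n
  induction n with
  | zero =>
    intro b hb hg lam hrel I
    have huniq : ∀ J : Fin 0 → Fin p, J = I := fun J => Subsingleton.elim _ _
    rw [Fintype.sum_eq_single I (fun J hJ => absurd (huniq J) hJ)] at hrel
    simp only [Finset.univ_eq_empty, Finset.prod_empty, mul_one] at hrel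
    exact (pow_eq_zero_iff hp.ne').mp hrel
  | succ n ihn =>
    intro b hb hg lam hrel I
    set lam2 : ℕ → (Fin n → Fin p) → E :=
      fun i J => if h : i < p then lam (Fin.cons ⟨i, h⟩ J) else 0 with hlam2
    have hconv : ∑ i ∈ Finset.range p, ∑ J : Fin n → Fin p,
        lam2 i J ^ p * (b 0 ^ i * ∏ k, b k.succ ^ (J k : ℕ)) = 0 := by
      rw [← hrel]
      rw [← Equiv.sum_comp (Fin.consEquiv (fun _ : Fin (n+1) => Fin p))
        (fun I : Fin (n+1) → Fin p => lam I ^ p * ∏ k, b k ^ (I k : ℕ))]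
      rw [Fintype.sum_prod_type]
      rw [← Fin.sum_univ_eq_sum_range (fun i => ∑ J : Fin n → Fin p,
        lam2 i J ^ p * (b 0 ^ i * ∏ k, b k.succ ^ (J k : ℕ))) p]
      refine Finset.sum_congr rfl fun i _ => Finset.sum_congr rfl fun J _ => ?_
      have h1 : lam2 (i : ℕ) J = lam (Fin.cons i J) := by
        simp only [hlam2, dif_pos i.isLt, Fin.eta]
      have h2 : ∏ k : Fin (n+1), b k ^ ((Fin.cons i J : Fin (n+1) → Fin p) k : ℕ) =
          b 0 ^ (i : ℕ) * ∏ k : Fin n, b k.succ ^ (J k : ℕ) := by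
        rw [Fin.prod_univ_succ]
        simp [Fin.cons_zero, Fin.cons_succ]
      simp only [Fin.consEquiv_apply]
      rw [h1, h2]
      rfl
    have hIH : ∀ lam0 : (Fin n → Fin p) → E,
        (∑ J : Fin n → Fin p, lam0 J ^ p * ∏ k, b k.succ ^ (J k : ℕ)) = 0 →
        ∀ J, lam0 J = 0 := by
      intro lam0 h0
      exact fun J => congrFun (funext (ihn (fun k => b k.succ) (fun k => hb k.succ)
        (hg.comp Fin.succ (Fin.succ_injective n)) lam0 h0)) J
    have := depA_aux b hb hg hIH p le_rfl lam2 hconv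
    have hI := this (I 0 : ℕ) (I 0).isLt
    have : lam2 ((I 0 : ℕ)) (Fin.tail I) = lam I := by
      simp only [hlam2, dif_pos (I 0).isLt, Fin.eta, Fin.cons_self_tail]
    rw [← this, hI, Pi.zero_apply]
end DepA2

section Forms
variable {p : ℕ} [Fact p.Prime] {E : Type} [Field E] [CharP E p] {n : ℕ}

local notation "D" => KaehlerDifferential.D ℤ E
local notation "Ω" => KaehlerDifferential ℤ E

lemma mem_exact (c : Fin n → E) :
    ExteriorAlgebra.ιMulti E n (fun i => D (c i)) ∈ hRel p E n :=
  AddSubgroup.subset_closure (Or.inl ⟨c, rfl⟩)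

lemma mem_pOp (a : E) (b : Fin n → E) (hb : ∀ i, b i ≠ 0) :
    (a ^ p - a) • ExteriorAlgebra.ιMulti E n (fun i => (b i)⁻¹ • D (b i)) ∈ hRel p E n :=
  AddSubgroup.subset_closure (Or.inr ⟨a, b, hb, rfl⟩)

lemma termB (b : Fin n → E) (hb : ∀ k, b k ≠ 0) (c : E) (I : Fin n → ℕ) (j : Fin n)
    (hj : ¬ (p ∣ I j)) :
    (c ^ p * ∏ k, b k ^ I k) • ExteriorAlgebra.ιMulti E n
      (fun k => (b k)⁻¹ • D (b k)) ∈ hRel p E n := by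
  classical
  have hp : 0 < p := (Fact.out : p.Prime).pos
  rcases eq_or_ne c 0 with rfl | hc
  · rw [zero_pow hp.ne', zero_mul, zero_smul]
    exact zero_mem _
  set f := ExteriorAlgebra.ιMulti E n (M := KaehlerDifferential ℤ E) with hf
  set g : Fin n → Ω := fun k => (b k)⁻¹ • D (b k) with hg
  set w : Fin n → Ω := fun k => D (b k) with hw
  set u : E := c ^ p * ∏ k, b k ^ I k with hu
  have hprodne : (∏ k, b k ^ I k) ≠ 0 :=
    Finset.prod_ne_zero_iff.2 fun k _ => pow_ne_zero _ (hb k)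
  have hu0 : u ≠ 0 := mul_ne_zero (pow_ne_zero _ hc) hprodne
  have hgd : ∀ k, dlog (b k) = g k := fun k => rfl
  have hdlogu : dlog u = ∑ k, (I k : E) • g k := by
    rw [hu, dlog_mul (pow_ne_zero _ hc) hprodne, dlog_pow_p, zero_add,
      dlog_prod _ _ (fun k _ => pow_ne_zero _ (hb k))]
    refine Finset.sum_congr rfl fun k _ => ?_
    rw [dlog_pow _ (hb k), hgd, ← Nat.cast_smul_eq_nsmul E]
  have hIj : ((I j : ℕ) : E) ≠ 0 := by
    rw [Ne, CharP.cast_eq_zero_iff E p]; exact hj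
  -- step 1
  have step1 : f (Function.update g j (dlog u)) = ((I j : ℕ) : E) • f g := by
    rw [hdlogu, AlternatingMap.map_update_sum]
    rw [Finset.sum_eq_single j ?h1 (by simp)]
    · rw [AlternatingMap.map_update_smul, Function.update_eq_self]
    case h1 =>
      intro k _ hkj
      rw [AlternatingMap.map_update_smul,
        f.map_eq_zero_of_eq (Function.update g j (g k))
          (show Function.update g j (g k) j = Function.update g j (g k) k by
            rw [Function.update_self, Function.update_of_ne hkj])
          (Ne.symm hkj), smul_zero]
  -- step 2
  have step2 : u • f (Function.update g j (dlog u)) = f (Function.update g j (D u)) := by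
    rw [← AlternatingMap.map_update_smul, smul_dlog hu0]
  -- step 3
  set P : E := ∏ k ∈ Finset.univ.erase j, (b k)⁻¹ with hP
  have step3 : f (Function.update g j (D u)) = P • f (Function.update w j (D u)) := by
    have hfun : Function.update g j (D u) = fun k =>
        (Function.update (fun k => (b k)⁻¹) j 1 k) • (Function.update w j (D u) k) := by
      funext k
      rcases eq_or_ne k j with rfl | hkj
      · rw [Function.update_self, Function.update_self, Function.update_self, one_smul]
      · rw [Function.update_of_ne hkj, Function.update_of_ne hkj, Function.update_of_ne hkj]
    rw [hfun]
    have := (f.toMultilinearMap).map_smul_univ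
      (Function.update (fun k => (b k)⁻¹) j 1) (Function.update w j (D u))
    rw [show ((f.toMultilinearMap) (fun k => (Function.update (fun k => (b k)⁻¹) j 1 k) •
        (Function.update w j (D u) k))) = f (fun k => (Function.update (fun k => (b k)⁻¹) j 1 k) •
        (Function.update w j (D u) k)) from rfl] at this
    rw [this, Finset.prod_update_of_mem (Finset.mem_univ j), one_mul,
      Finset.sdiff_singleton_eq_erase]
    rfl
  -- step 4 : wedging D s is zero
  set s : E := ((I j : ℕ) : E)⁻¹ * P with hs
  have hP0 : P ≠ 0 := Finset.prod_ne_zero_iff.2 fun k _ => inv_ne_zero (hb k)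
  have hDs : D s = ∑ k ∈ Finset.univ.erase j, (((I j : ℕ) : E)⁻¹ * (-P * (b k)⁻¹)) • w k := by
    have hDnat : D ((((I j : ℕ) : E))⁻¹) = 0 := by
      rw [Derivation.leibniz_inv, Derivation.map_natCast, smul_zero]
    rw [hs, Derivation.leibniz, hDnat, smul_zero, add_zero, ← smul_dlog hP0,
      hP, dlog_prod _ _ (fun k _ => inv_ne_zero (hb k))]
    rw [Finset.smul_sum, Finset.smul_sum]
    refine Finset.sum_congr rfl fun k hk => ?_
    have h1 : dlog ((b k)⁻¹) = -((b k)⁻¹ • w k) := by rw [dlog_inv]; rfl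
    rw [h1, smul_neg, smul_neg, smul_smul, smul_smul, ← neg_smul]
    congr 1
    ring
  have step4 : f (Function.update w j (D s)) = 0 := by
    rw [hDs, AlternatingMap.map_update_sum]
    refine Finset.sum_eq_zero fun k hk => ?_
    have hkj : k ≠ j := (Finset.mem_erase.mp hk).1
    rw [AlternatingMap.map_update_smul,
      f.map_eq_zero_of_eq (Function.update w j (w k))
        (show Function.update w j (w k) j = Function.update w j (w k) k by
          rw [Function.update_self, Function.update_of_ne hkj])
        (Ne.symm hkj), smul_zero]
  -- step 5
  have step5 : f (Function.update w j (D (s * u))) = s • f (Function.update w j (D u)) := by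
    rw [Derivation.leibniz, AlternatingMap.map_update_add, AlternatingMap.map_update_smul,
      AlternatingMap.map_update_smul, step4, smul_zero, add_zero]
  -- assemble
  have key : u • f g = f (fun k => D (Function.update b j (s * u) k)) := by
    have h1 : f g = ((I j : ℕ) : E)⁻¹ • f (Function.update g j (dlog u)) := by
      rw [step1, smul_smul, inv_mul_cancel₀ hIj, one_smul]
    rw [h1, smul_comm, step2, step3, smul_smul, ← hs, ← step5]
    congr 1
    funext k
    rcases eq_or_ne k j with rfl | hkj
    · rw [Function.update_self, Function.update_self]
    · rw [Function.update_of_ne hkj, Function.update_of_ne hkj]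
  rw [key]
  exact mem_exact _
end Forms

section Main
variable {p : ℕ} [Fact p.Prime] {E : Type} [Field E] [CharP E p] {n : ℕ}

local notation "D" => KaehlerDifferential.D ℤ E
local notation "Ω" => KaehlerDifferential ℤ E

lemma keyLemma (r : ℕ) (hr : r < n + 1)
    (hCr : ∀ (d m : ℕ), 0 < d → d ^ r < m →
      ∀ f : MvPolynomial (Fin m) E, f.IsHomogeneous d →
        ∃ v : Fin m → E, v ≠ 0 ∧ MvPolynomial.eval v f = 0)
    (a : E) (b : Fin n → E) (hb : ∀ i, b i ≠ 0) :
    a • ExteriorAlgebra.ιMulti E n (fun i => (b i)⁻¹ • D (b i)) ∈ hRel p E n := by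
  classical
  have hp : 0 < p := (Fact.out : p.Prime).pos
  have hp2 : 2 ≤ p := (Fact.out : p.Prime).two_le
  haveI : NeZero p := ⟨hp.ne'⟩
  by_cases hLI : LinearIndependent E fun i => (b i)⁻¹ • D (b i)
  swap
  · rw [AlternatingMap.map_linearDependent _ _ hLI, smul_zero]
    exact zero_mem _
  have hm : p ^ r < p ^ n + 1 :=
    Nat.lt_succ_of_le (Nat.pow_le_pow_right hp (by omega))
  set e : (Fin n → Fin p) ≃ Fin (p ^ n) := finFunctionFinEquiv with he
  set var : (Fin n → Fin p) → Fin (p ^ n + 1) := fun I => (e I).castSucc with hvar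
  set Y : Fin (p ^ n + 1) := Fin.last _ with hY
  set B : (Fin n → Fin p) → E := fun I => ∏ k, b k ^ (I k : ℕ) with hB
  set F : MvPolynomial (Fin (p ^ n + 1)) E :=
    (∑ I : Fin n → Fin p, MvPolynomial.C (B I) * (MvPolynomial.X (var I)) ^ p)
    - MvPolynomial.C a * (MvPolynomial.X Y) ^ p
    - (MvPolynomial.X Y) ^ (p - 1) * MvPolynomial.X (var 0) with hF
  have hhom : F.IsHomogeneous p := by
    refine MvPolynomial.IsHomogeneous.sub (MvPolynomial.IsHomogeneous.sub ?_ ?_) ?_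
    · refine MvPolynomial.IsHomogeneous.sum _ _ _ fun I _ => ?_
      have h2 := (MvPolynomial.isHomogeneous_C _ (B I)).mul
        ((MvPolynomial.isHomogeneous_X E (var I)).pow p)
      rw [zero_add, one_mul] at h2
      exact h2
    · have h2 := (MvPolynomial.isHomogeneous_C _ a).mul
        ((MvPolynomial.isHomogeneous_X E Y).pow p)
      rw [zero_add, one_mul] at h2
      exact h2
    · have h2 := ((MvPolynomial.isHomogeneous_X E Y).pow (p - 1)).mul
        (MvPolynomial.isHomogeneous_X E (var 0))
      rw [one_mul, show (p - 1) + 1 = p from by omega] at h2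
      exact h2
  obtain ⟨v, hv0, hveval⟩ := hCr p (p ^ n + 1) hp hm F hhom
  set y : E := v Y with hy'
  set x : (Fin n → Fin p) → E := fun I => v (var I) with hx
  have heval : (∑ I : Fin n → Fin p, B I * x I ^ p) - a * y ^ p - y ^ (p - 1) * x 0 = 0 := by
    rw [← hveval, hF]
    simp only [map_sub, map_mul, map_pow, map_sum, MvPolynomial.eval_C, MvPolynomial.eval_X]
    rfl
  rcases eq_or_ne y 0 with hy | hy
  · -- degenerate case: relation among the monomials in the `b i`
    rw [hy, zero_pow hp.ne', zero_pow (show p - 1 ≠ 0 by omega), mul_zero, sub_zero, zero_mul,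
      sub_zero] at heval
    have hrel0 : ∑ I : Fin n → Fin p, x I ^ p * ∏ k, b k ^ (I k : ℕ) = 0 := by
      rw [← heval]
      exact Finset.sum_congr rfl fun I _ => by simp only [hB]; ring
    have hall := depA n b hb hLI x hrel0
    refine absurd (funext fun idx => ?_) hv0
    show v idx = 0
    induction idx using Fin.lastCases with
    | last => exact hy
    | cast t =>
      have h6 : v t.castSucc = x (e.symm t) := by
        simp only [hx, hvar, Equiv.apply_symm_apply]
      rw [h6]
      exact hall _
  · -- main case
    set cc : (Fin n → Fin p) → E := fun I => x I * y⁻¹ with hcc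
    have hsub : ∀ I, x I = cc I * y := fun I => by
      rw [hcc]; field_simp
    have hyp1 : y ^ (p - 1) * y = y ^ p := by
      rw [← pow_succ]; congr 1; omega
    have hpush : y ^ p * ∑ I : Fin n → Fin p, B I * cc I ^ p =
        ∑ I : Fin n → Fin p, B I * (cc I * y) ^ p := by
      rw [Finset.mul_sum]
      exact Finset.sum_congr rfl fun I _ => by ring
    have h3 : y ^ p * ((∑ I : Fin n → Fin p, B I * cc I ^ p) - a - cc 0) = 0 := by
      simp only [hsub] at heval
      rw [mul_sub, mul_sub, hpush]
      linear_combination heval + cc 0 * hyp1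
    have h4 : (∑ I : Fin n → Fin p, B I * cc I ^ p) - a - cc 0 = 0 :=
      (mul_eq_zero.mp h3).resolve_left (pow_ne_zero _ hy)
    have hB0 : B 0 = 1 := by
      simp only [hB, Pi.zero_apply, Fin.val_zero, pow_zero]
      exact Finset.prod_const_one
    have hsplit := Finset.sum_erase_add Finset.univ
      (fun I => B I * cc I ^ p) (Finset.mem_univ 0)
    simp only [hB0, one_mul] at hsplit
    have ha : a = (cc 0 ^ p - cc 0) +
        ∑ I ∈ Finset.univ.erase 0, B I * cc I ^ p := by
      linear_combination - h4 - hsplit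
    rw [ha, add_smul, Finset.sum_smul]
    refine add_mem (mem_pOp (cc 0) b hb) (AddSubgroup.sum_mem _ fun I hI => ?_)
    have hI0 : I ≠ 0 := (Finset.mem_erase.mp hI).1
    obtain ⟨j, hj⟩ : ∃ j, I j ≠ 0 := by
      by_contra h
      push_neg at h
      exact hI0 (funext h)
    have hjv : ¬ (p ∣ (I j : ℕ)) := by
      refine Nat.not_dvd_of_pos_of_lt ?_ (I j).isLt
      exact Nat.pos_of_ne_zero fun h0 => hj (Fin.ext (by simpa using h0))
    have heq : B I * cc I ^ p = cc I ^ p * ∏ k, b k ^ (I k : ℕ) := by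
      simp only [hB]; ring
    rw [heq]
    exact termB b hb (cc I) (fun k => (I k : ℕ)) j hjv
end Main

/-- Let `E` be a field of characteristic `p` which is `C_r` (every homogeneous
form of degree `d` in more than `d^r` variables has a nontrivial zero) with `r < n + 1`.
Then the Milne–Kato cohomology group `H^{n+1}_p(E)` vanishes, i.e. every `n`-form lies in
the subgroup of relations defining `H^{n+1}_p(E)`. -/
theorem milne_kato_vanishes_of_Cr
    (p : ℕ) [Fact p.Prime] (E : Type) [Field E] [CharP E p]
    (r n : ℕ) (hr : r < n + 1)
    (hCr : ∀ (d m : ℕ), 0 < d → d ^ r < m →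
      ∀ f : MvPolynomial (Fin m) E, f.IsHomogeneous d →
        ∃ v : Fin m → E, v ≠ 0 ∧ MvPolynomial.eval v f = 0) :
    nForms E n ≤ hRel p E n := by
  classical
  rw [nForms]
  refine (AddSubgroup.closure_le _).mpr ?_
  rintro x ⟨b, c, rfl⟩
  simp only [SetLike.mem_coe]
  by_cases hc : ∀ i, c i ≠ 0
  · have hmain := keyLemma (p := p) r hr hCr (b * ∏ i, c i) c hc
    have hsc : ExteriorAlgebra.ιMulti E n (fun i => (c i)⁻¹ • KaehlerDifferential.D ℤ E (c i)) =
        (∏ i, (c i)⁻¹) • ExteriorAlgebra.ιMulti E n (fun i => KaehlerDifferential.D ℤ E (c i)) := by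
      exact (ExteriorAlgebra.ιMulti E n).toMultilinearMap.map_smul_univ
        (fun i => (c i)⁻¹) (fun i => KaehlerDifferential.D ℤ E (c i))
    rw [hsc, smul_smul] at hmain
    have hone : (b * ∏ i, c i) * ∏ i, (c i)⁻¹ = b := by
      rw [mul_assoc, ← Finset.prod_mul_distrib]
      simp only [mul_inv_cancel₀ (hc _)]
      rw [Finset.prod_const_one, mul_one]
    rwa [hone] at hmain
  · push_neg at hc
    obtain ⟨i, hi⟩ := hc
    have hz : ExteriorAlgebra.ιMulti E n
        (fun i => KaehlerDifferential.D ℤ E (c i)) = 0 := by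
      refine (ExteriorAlgebra.ιMulti E n).toMultilinearMap.map_coord_zero i ?_
      rw [hi, map_zero]
    rw [hz, smul_zero]
    exact zero_mem _
end

section
/- Let k be a perfect field of characteristic p, (K, v) a valued field of characteristic p with v geometric of rank 1 over k, trdeg_k(K) = r, and residue field K̄ with [K̄ : K̄^p] = p^{r-1}. Given any chain of degree-p purely inseparable extensions K^p = F_0 ⊂ F_1 ⊂ ... ⊂ F_r = K, exactly one of the residue field extensions F̄_{i-1} ⊆ F̄_i is trivial and the remaining r−1 are of degree p. -/
set_option synthInstance.maxHeartbeats 400000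
set_option maxHeartbeats 1000000

open IsLocalRing

namespace Stmt14Aux

variable {K : Type} [Field K] (A : ValuationSubring K)

/-- The image in the residue field of `A ∩ F`. -/
def res (F : Subfield K) : Subring (ResidueField ↥A) :=
  Subring.map (residue ↥A) (Subring.comap A.subtype F.toSubring)

lemma mem_res {F : Subfield K} {x : ResidueField ↥A} :
    x ∈ res A F ↔ ∃ a : ↥A, (a : K) ∈ F ∧ residue ↥A a = x := by
  simp only [res, Subring.mem_map, Subring.mem_comap]
  rfl

lemma res_inv_mem (F : Subfield K) : ∀ x ∈ res A F, x⁻¹ ∈ res A F := by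
  rintro x hx
  rcases (mem_res A).mp hx with ⟨a, haF, rfl⟩
  by_cases h0 : residue ↥A a = 0
  · rw [h0, inv_zero]; exact Subring.zero_mem _
  · have hu : IsUnit a := by
      by_contra hnu
      exact h0 (Ideal.Quotient.eq_zero_iff_mem.mpr ((IsLocalRing.mem_maximalIdeal a).mpr hnu))
    obtain ⟨b, hab⟩ := isUnit_iff_exists_inv.mp hu
    have habK : (a : K) * (b : K) = 1 := by
      have := congrArg (fun z : ↥A => (z : K)) hab
      push_cast at this
      exact this
    refine (mem_res A).mpr ⟨b, ?_, ?_⟩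
    · have : (b : K) = ((a : K))⁻¹ := eq_inv_of_mul_eq_one_left (by rw [mul_comm]; exact habK)
      rw [this]
      exact F.inv_mem haF
    · have : residue ↥A a * residue ↥A b = 1 := by rw [← map_mul, hab, map_one]
      exact eq_inv_of_mul_eq_one_right this

/-- The residue field of `F`, as a subfield of the residue field of `K`. -/
def resField (F : Subfield K) : Subfield (ResidueField ↥A) :=
  { res A F with inv_mem' := fun x hx => res_inv_mem A F x hx }

lemma mem_resField {F : Subfield K} {x : ResidueField ↥A} :
    x ∈ resField A F ↔ ∃ a : ↥A, (a : K) ∈ F ∧ residue ↥A a = x := mem_res A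

lemma resField_mono {F F' : Subfield K} (h : F ≤ F') : resField A F ≤ resField A F' := by
  intro x hx
  rcases (mem_resField A).mp hx with ⟨a, haF, rfl⟩
  exact (mem_resField A).mpr ⟨a, h haF, rfl⟩

lemma resField_top : resField A ⊤ = ⊤ := by
  rw [eq_top_iff]
  intro x _
  obtain ⟨a, rfl⟩ := Ideal.Quotient.mk_surjective x
  exact (mem_resField A).mpr ⟨a, trivial, rfl⟩

lemma resField_frobenius (p : ℕ) [Fact p.Prime] [CharP K p] [CharP (ResidueField ↥A) p] :
    resField A (frobenius K p).fieldRange = (frobenius (ResidueField ↥A) p).fieldRange := by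
  have hp1 : 1 ≤ p := (Fact.out : p.Prime).one_lt.le
  apply le_antisymm
  · intro x hx
    rcases (mem_resField A).mp hx with ⟨a, haF, rfl⟩
    rcases RingHom.mem_fieldRange.mp haF with ⟨y, hy⟩
    have hyA : y ∈ A := by
      by_cases h1 : y ∈ A
      · exact h1
      · have hy0 : y ≠ 0 := fun hc => h1 (hc ▸ A.zero_mem)
        have h2 : y⁻¹ ∈ A := (A.mem_or_inv_mem y).resolve_left h1
        have hyp : y ^ p ∈ A := by rw [frobenius_def] at hy; rw [hy]; exact a.2
        have key : y = y ^ p * ((y ^ (p - 1))⁻¹) := by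
          rw [eq_mul_inv_iff_mul_eq₀ (pow_ne_zero _ hy0), mul_comm, ← pow_succ]
          congr 1
          omega
        rw [key] at h1
        exact absurd (mul_mem hyp (by rw [← inv_pow]; exact pow_mem h2 _)) h1
    refine RingHom.mem_fieldRange.mpr ⟨residue ↥A ⟨y, hyA⟩, ?_⟩
    rw [frobenius_def, ← map_pow]
    congr 1
    apply Subtype.ext
    show y ^ p = (a : K)
    rw [← hy, frobenius_def]
  · intro x hx
    rcases RingHom.mem_fieldRange.mp hx with ⟨z, rfl⟩
    obtain ⟨b, rfl⟩ := Ideal.Quotient.mk_surjective z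
    refine (mem_resField A).mpr ⟨b ^ p, RingHom.mem_fieldRange.mpr ⟨(b : K), ?_⟩, ?_⟩
    · rw [frobenius_def]; norm_cast
    · rw [map_pow]; exact (frobenius_def (R := ResidueField ↥A) (p := p) (x := residue ↥A b)).symm


lemma incl_smul_coe {κ : Type} [Field κ] {S T : Subfield κ} (h : S ≤ T) (c : ↥S) (x : ↥T) :
    letI := (Subfield.inclusion h).toAlgebra
    ((c • x : ↥T) : κ) = (c : κ) * (x : κ) := rfl

lemma rank_resField_le {F F' : Subfield K} (h : F ≤ F') {n : ℕ} (hn : 0 < n)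
    (hd : letI := (Subfield.inclusion h).toAlgebra
          Module.finrank ↥F ↥F' = n) :
    letI := (Subfield.inclusion (resField_mono A h)).toAlgebra
    Module.rank ↥(resField A F) ↥(resField A F') ≤ n := by
  letI : Algebra ↥F ↥F' := (Subfield.inclusion h).toAlgebra
  letI : Algebra ↥(resField A F) ↥(resField A F') :=
    (Subfield.inclusion (resField_mono A h)).toAlgebra
  haveI : FiniteDimensional ↥F ↥F' := FiniteDimensional.of_finrank_pos (hd ▸ hn)
  apply rank_le
  intro s hs
  rw [← hd, ← Fintype.card_coe s]
  -- choose lifts of the elements of `s`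
  have lift : ∀ x : {y // y ∈ s}, ∃ a : ↥A,
      (a : K) ∈ F' ∧ residue ↥A a = ((x : ↥(resField A F')) : ResidueField ↥A) :=
    fun x => (mem_resField A).mp (x.1).2
  choose a haF' haπ using lift
  set b : {y // y ∈ s} → ↥F' := fun x => ⟨(a x : K), haF' x⟩ with hbdef
  have hb : LinearIndependent ↥F b := by
    rw [Fintype.linearIndependent_iff]
    intro g hg
    by_contra hng
    push_neg at hng
    obtain ⟨i₀, hi₀⟩ := hng
    classical
    set T : Finset {y // y ∈ s} := Finset.univ.filter (fun i => g i ≠ 0) with hTdef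
    have hTne : T.Nonempty := ⟨i₀, by simp [hTdef, hi₀]⟩
    obtain ⟨j, hjT, hjmax⟩ := T.exists_max_image (fun i => A.valuation ((g i : ↥F) : K)) hTne
    have hgj0 : g j ≠ 0 := by
      have := Finset.mem_filter.mp hjT
      exact this.2
    have hgjK : ((g j : ↥F) : K) ≠ 0 := fun hc => hgj0 (Subtype.ext hc)
    have hd_memA : ∀ i, ((g i : ↥F) : K) / ((g j : ↥F) : K) ∈ A := by
      intro i
      by_cases hgi : g i = 0
      · rw [hgi]
        simpa using A.zero_mem
      · have hiT : i ∈ T := Finset.mem_filter.mpr ⟨Finset.mem_univ _, hgi⟩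
        have hv := hjmax i hiT
        rw [← A.valuation_le_one_iff, map_div₀]
        have hb0 : (0 : A.ValueGroup) < A.valuation ((g j : ↥F) : K) :=
          zero_lt_iff.mpr ((Valuation.ne_zero_iff _).mpr hgjK)
        exact (div_le_one₀ hb0).mpr hv
    have hd_memF : ∀ i, ((g i : ↥F) : K) / ((g j : ↥F) : K) ∈ F :=
      fun i => F.div_mem (g i).2 (g j).2
    -- the relation in K
    have hsum : ∑ i, ((g i : ↥F) : K) * ((a i : ↥A) : K) = 0 := by
      have h2 := congrArg (F'.subtype) hg
      rw [map_sum, map_zero] at h2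
      have h3 : ∀ i : {y // y ∈ s},
          F'.subtype (g i • b i) = ((g i : ↥F) : K) * ((a i : ↥A) : K) := fun i => rfl
      rw [Finset.sum_congr rfl (fun i _ => h3 i)] at h2
      exact h2
    have hsum2 : ∑ i, (((g i : ↥F) : K) / ((g j : ↥F) : K)) * ((a i : ↥A) : K) = 0 := by
      have : ∑ i, (((g i : ↥F) : K) / ((g j : ↥F) : K)) * ((a i : ↥A) : K)
          = (((g j : ↥F) : K))⁻¹ * ∑ i, ((g i : ↥F) : K) * ((a i : ↥A) : K) := by
        rw [Finset.mul_sum]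
        exact Finset.sum_congr rfl (fun i _ => by ring)
      rw [this, hsum, mul_zero]
    set dA : {y // y ∈ s} → ↥A := fun i => ⟨_, hd_memA i⟩ with hdAdef
    have hsumA : ∑ i, dA i * a i = 0 := by
      apply Subtype.coe_injective
      push_cast
      exact hsum2
    have hres0 : ∑ i, (residue ↥A (dA i)) * ((i : ↥(resField A F')) : ResidueField ↥A) = 0 := by
      have h4 := congrArg (residue ↥A) hsumA
      rw [map_sum, map_zero] at h4
      calc ∑ i, (residue ↥A (dA i)) * ((i : ↥(resField A F')) : ResidueField ↥A)
          = ∑ i, residue ↥A (dA i * a i) := by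
            refine Finset.sum_congr rfl (fun i _ => ?_)
            rw [map_mul, haπ]
        _ = 0 := h4
    rw [Fintype.linearIndependent_iff] at hs
    set e : {y // y ∈ s} → ↥(resField A F) :=
      fun i => ⟨residue ↥A (dA i), (mem_resField A).mpr ⟨dA i, hd_memF i, rfl⟩⟩ with hedef
    have he : ∑ i, e i • (i : ↥(resField A F')) = 0 := by
      apply Subtype.coe_injective
      push_cast
      have h5 : ∀ i : {y // y ∈ s},
          ((e i • (i : ↥(resField A F')) : ↥(resField A F')) : ResidueField ↥A)
            = (residue ↥A (dA i)) * ((i : ↥(resField A F')) : ResidueField ↥A) := fun i => rfl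
      rw [Finset.sum_congr rfl (fun i _ => h5 i), hres0]
    have hall := hs e he j
    have hej : e j = 1 := by
      apply Subtype.ext
      show residue ↥A (dA j) = 1
      have : dA j = 1 := by
        apply Subtype.ext
        show ((g j : ↥F) : K) / ((g j : ↥F) : K) = 1
        exact div_self hgjK
      rw [this, map_one]
    rw [hej] at hall
    exact one_ne_zero hall
  exact hb.fintype_card_le_finrank


lemma finrank_step {κ : Type} [Field κ] {S T : Subfield κ} (h : S ≤ T) :
    (letI := (Subfield.inclusion h).toAlgebra
     Module.finrank ↥S ↥T) * Module.finrank ↥T κ = Module.finrank ↥S κ := by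
  letI := (Subfield.inclusion h).toAlgebra
  haveI : IsScalarTower ↥S ↥T κ := IsScalarTower.of_algebraMap_eq (fun c => rfl)
  exact Module.finrank_mul_finrank ↥S ↥T κ

lemma chain_finrank {κ : Type} [Field κ] : ∀ (m : ℕ) (G : Fin (m+1) → Subfield κ)
    (hm : ∀ i : Fin m, G i.castSucc ≤ G i.succ),
    Module.finrank ↥(G 0) κ =
      (∏ i : Fin m, letI := (Subfield.inclusion (hm i)).toAlgebra
        Module.finrank ↥(G i.castSucc) ↥(G i.succ)) * Module.finrank ↥(G (Fin.last m)) κ := by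
  intro m
  induction m with
  | zero =>
      intro G hm
      have h0 : (Fin.last 0) = 0 := rfl
      rw [h0]
      simp
  | succ m ih =>
      intro G hm
      have h01 : G 0 ≤ G 1 := hm 0
      set G' : Fin (m + 1) → Subfield κ := fun i => G i.succ with hG'
      have hm' : ∀ i : Fin m, G' i.castSucc ≤ G' i.succ := fun i => by
        have h2 := hm i.succ
        rwa [← Fin.succ_castSucc] at h2
      have hlast : G' (Fin.last m) = G (Fin.last (m + 1)) := by
        rw [hG']
        congr 1
      have ihh : Module.finrank ↥(G 1) κ =
          (∏ i : Fin m, letI := (Subfield.inclusion (hm' i)).toAlgebra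
            Module.finrank ↥(G' i.castSucc) ↥(G' i.succ)) * Module.finrank ↥(G' (Fin.last m)) κ :=
        ih G' hm'
      rw [← finrank_step h01, ihh, Fin.prod_univ_succ, hlast]
      rw [mul_assoc]
      congr 1

lemma finrank_eq_one_iff_eq {κ : Type} [Field κ] {S T : Subfield κ} (h : S ≤ T) :
    (letI := (Subfield.inclusion h).toAlgebra
     Module.finrank ↥S ↥T = 1) ↔ S = T := by
  letI := (Subfield.inclusion h).toAlgebra
  constructor
  · intro h1
    obtain ⟨v, hv0, hvspan⟩ := finrank_eq_one_iff'.mp h1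
    apply le_antisymm h
    intro x hxT
    obtain ⟨c0, hc0⟩ := hvspan 1
    have hc0K : (c0 : κ) * (v : κ) = 1 := congrArg (fun z : ↥T => (z : κ)) hc0
    obtain ⟨c, hc⟩ := hvspan ⟨x, hxT⟩
    have hcK : (c : κ) * (v : κ) = x := congrArg (fun z : ↥T => (z : κ)) hc
    have hc00 : (c0 : κ) ≠ 0 := fun hc' => by rw [hc', zero_mul] at hc0K; exact zero_ne_one hc0K
    have hvK : (v : κ) = ((c0 : κ))⁻¹ := by
      field_simp
      rw [mul_comm]
      exact hc0K
    have hx : x = (c : κ) * ((c0 : κ))⁻¹ := by rw [← hcK, hvK]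
    rw [hx]
    exact S.mul_mem c.2 (S.inv_mem c0.2)
  · intro hST
    subst hST
    apply finrank_eq_one_iff'.mpr
    refine ⟨1, one_ne_zero, fun w => ⟨⟨(w : κ), w.2⟩, ?_⟩⟩
    apply Subtype.ext
    show ((w : κ)) * ((1 : ↥S) : κ) = (w : κ)
    simp

lemma finrank_top_eq_one {κ : Type} [Field κ] :
    Module.finrank ↥(⊤ : Subfield κ) κ = 1 := by
  apply finrank_eq_one_iff'.mpr
  refine ⟨1, one_ne_zero, fun w => ⟨⟨w, trivial⟩, ?_⟩⟩
  show w * 1 = w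
  exact mul_one w


end Stmt14Aux

/-- Let `k` be a perfect field of characteristic `p`, `(K, v)` a valued field
of characteristic `p` with `v` geometric of rank 1 over `k` (a DVR valuation subring `A`
containing `k` whose residue field `K̄` has transcendence degree `r - 1` over `k`),
`trdeg_k K = r` and `[K̄ : K̄^p] = p^(r-1)`.  Given any chain of degree-`p` purely inseparable
extensions `K^p = F₀ ⊂ F₁ ⊂ ⋯ ⊂ F_r = K`, exactly one of the residue field extensions
`F̄_{i-1} ⊆ F̄_i` is trivial and the remaining `r - 1` are of degree `p`.  Here `F̄_i` is the
image in the residue field of `A ∩ F_i`. -/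
theorem chain_residue_extensions_one_trivial
    (p r : ℕ) [Fact p.Prime] (hr : 0 < r)
    (K : Type) [Field K] [CharP K p]
    (k : Subfield K) [PerfectField ↥k]
    (A : ValuationSubring K) [IsDiscreteValuationRing ↥A]
    [CharP (IsLocalRing.ResidueField ↥A) p]
    (hkA : (k : Set K) ⊆ (A : Set K))
    (trK : ∃ x : Fin r → K, IsTranscendenceBasis ↥k x)
    (trκ :
      letI : Algebra ↥k (IsLocalRing.ResidueField ↥A) :=
        ((IsLocalRing.residue ↥A).comp
          ((k.subtype).codRestrict A.toSubring fun c => hkA c.2)).toAlgebra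
      ∃ x : Fin (r - 1) → IsLocalRing.ResidueField ↥A, IsTranscendenceBasis ↥k x)
    (hKp : Module.finrank (↥(frobenius K p).fieldRange) K = p ^ r)
    (hres : Module.finrank (↥(frobenius (IsLocalRing.ResidueField ↥A) p).fieldRange)
      (IsLocalRing.ResidueField ↥A) = p ^ (r - 1))
    (F : Fin (r + 1) → Subfield K)
    (hF0 : F 0 = (frobenius K p).fieldRange)
    (hFr : F (Fin.last r) = ⊤)
    (hmono : ∀ i : Fin r, F i.castSucc ≤ F i.succ)
    (hdeg : ∀ i : Fin r, ∀ h : F i.castSucc ≤ F i.succ,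
      letI : Algebra ↥(F i.castSucc) ↥(F i.succ) := (Subfield.inclusion h).toAlgebra
      Module.finrank ↥(F i.castSucc) ↥(F i.succ) = p) :
    -- the chain of residue subrings
    (∃! i₀ : Fin r,
      Subring.map (IsLocalRing.residue ↥A) (Subring.comap A.subtype (F i₀.castSucc).toSubring)
        = Subring.map (IsLocalRing.residue ↥A)
            (Subring.comap A.subtype (F i₀.succ).toSubring)) ∧
    (∀ i : Fin r,
      Subring.map (IsLocalRing.residue ↥A) (Subring.comap A.subtype (F i.castSucc).toSubring)
        ≠ Subring.map (IsLocalRing.residue ↥A)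
            (Subring.comap A.subtype (F i.succ).toSubring) →
      ∀ h : Subring.map (IsLocalRing.residue ↥A)
              (Subring.comap A.subtype (F i.castSucc).toSubring)
            ≤ Subring.map (IsLocalRing.residue ↥A)
              (Subring.comap A.subtype (F i.succ).toSubring),
        letI := (Subring.inclusion h).toAlgebra
        Module.finrank
          ↥(Subring.map (IsLocalRing.residue ↥A)
              (Subring.comap A.subtype (F i.castSucc).toSubring))
          ↥(Subring.map (IsLocalRing.residue ↥A)
              (Subring.comap A.subtype (F i.succ).toSubring)) = p) := by
  classical
  have hp : p.Prime := Fact.out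
  set κ := IsLocalRing.ResidueField ↥A with hκ
  set EE : Fin (r + 1) → Subfield κ := fun i => Stmt14Aux.resField A (F i) with hEE
  have hEEmono : ∀ i : Fin r, EE i.castSucc ≤ EE i.succ := fun i => Stmt14Aux.resField_mono A (hmono i)
  set D : Fin r → ℕ := fun i =>
    letI := (Subfield.inclusion (hEEmono i)).toAlgebra
    Module.finrank ↥(EE i.castSucc) ↥(EE i.succ) with hD
  -- each step has degree at most p
  have hrank_le : ∀ i : Fin r,
      (letI := (Subfield.inclusion (hEEmono i)).toAlgebra
       Module.rank ↥(EE i.castSucc) ↥(EE i.succ)) ≤ (p : Cardinal) := by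
    intro i
    exact_mod_cast Stmt14Aux.rank_resField_le A (hmono i) hp.pos (hdeg i (hmono i))
  have hD_le : ∀ i, D i ≤ p := by
    intro i
    letI := (Subfield.inclusion (hEEmono i)).toAlgebra
    exact Module.finrank_le_of_rank_le (hrank_le i)
  have hD_fin : ∀ i : Fin r,
      letI := (Subfield.inclusion (hEEmono i)).toAlgebra
      Module.Finite ↥(EE i.castSucc) ↥(EE i.succ) := by
    intro i
    letI := (Subfield.inclusion (hEEmono i)).toAlgebra
    exact Module.rank_lt_aleph0_iff.mp (lt_of_le_of_lt (hrank_le i) (Cardinal.nat_lt_aleph0 p))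
  have hD_pos : ∀ i, 0 < D i := by
    intro i
    letI := (Subfield.inclusion (hEEmono i)).toAlgebra
    haveI := hD_fin i
    exact Module.finrank_pos
  -- the product of the step degrees
  have hchain := Stmt14Aux.chain_finrank r EE hEEmono
  have hlast : EE (Fin.last r) = ⊤ := by
    show Stmt14Aux.resField A (F (Fin.last r)) = ⊤
    rw [hFr, Stmt14Aux.resField_top]
  have h0 : EE 0 = (frobenius κ p).fieldRange := by
    show Stmt14Aux.resField A (F 0) = _
    rw [hF0, Stmt14Aux.resField_frobenius]
  rw [hlast, Stmt14Aux.finrank_top_eq_one, mul_one, h0, hres] at hchain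
  have hprod : ∏ i : Fin r, D i = p ^ (r - 1) := hchain.symm
  -- each step degree is 1 or p
  have hD1p : ∀ i, D i = 1 ∨ D i = p := by
    intro i
    have hdvd : D i ∣ p ^ (r - 1) := hprod ▸ Finset.dvd_prod_of_mem D (Finset.mem_univ i)
    obtain ⟨kk, hkk, hDi⟩ := (Nat.dvd_prime_pow hp).mp hdvd
    have hkk1 : kk ≤ 1 := by
      by_contra hc
      push_neg at hc
      have : p ^ 2 ≤ p ^ kk := Nat.pow_le_pow_right hp.pos hc
      have h2 : p ^ kk ≤ p := hDi ▸ hD_le i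
      have h3 : p ^ 2 ≤ p ^ 1 := by rw [pow_one]; omega
      have := (Nat.pow_le_pow_iff_right hp.one_lt).mp h3
      omega
    interval_cases kk
    · left; rw [hDi, pow_zero]
    · right; rw [hDi, pow_one]
  -- counting
  set S1 : Finset (Fin r) := Finset.univ.filter (fun i => D i = p) with hS1
  have hcount : p ^ S1.card = p ^ (r - 1) := by
    rw [← hprod]
    rw [← Finset.prod_filter_mul_prod_filter_not Finset.univ (fun i => D i = p) D]
    have e1 : ∏ i ∈ S1, D i = p ^ S1.card := by
      rw [Finset.prod_congr rfl (fun i hi => (Finset.mem_filter.mp hi).2), Finset.prod_const]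
    have e2 : ∏ i ∈ Finset.univ.filter (fun i => ¬ D i = p), D i = 1 := by
      apply Finset.prod_eq_one
      intro i hi
      exact (hD1p i).resolve_right (Finset.mem_filter.mp hi).2
    rw [e1, e2, mul_one]
  have hS1card : S1.card = r - 1 := Nat.pow_right_injective hp.two_le hcount
  have hfilter_card : (Finset.univ.filter (fun i => D i = 1)).card = 1 := by
    have hne : ∀ i : Fin r, D i = 1 ↔ ¬ D i = p := by
      intro i
      rcases hD1p i with h | h <;> simp [h, hp.one_lt.ne, hp.one_lt.ne']
    have hcompl : Finset.univ.filter (fun i : Fin r => D i = 1) = Finset.univ \ S1 := by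
      ext i
      simp only [Finset.mem_filter, Finset.mem_univ, true_and, Finset.mem_sdiff, hS1]
      rw [hne i]
    rw [hcompl, Finset.card_sdiff_of_subset (Finset.subset_univ S1), Finset.card_univ, Fintype.card_fin,
      hS1card]
    omega
  obtain ⟨i₀, hi₀⟩ := Finset.card_eq_one.mp hfilter_card
  have hmemiff : ∀ i : Fin r, D i = 1 ↔ i = i₀ := by
    intro i
    constructor
    · intro h1
      have : i ∈ Finset.univ.filter (fun i => D i = 1) := Finset.mem_filter.mpr ⟨Finset.mem_univ _, h1⟩
      rw [hi₀, Finset.mem_singleton] at this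
      exact this
    · rintro rfl
      have : i ∈ ({i} : Finset (Fin r)) := Finset.mem_singleton_self i
      rw [← hi₀] at this
      exact (Finset.mem_filter.mp this).2
  -- translate to the subring statement
  have hiff : ∀ i : Fin r,
      (Subring.map (IsLocalRing.residue ↥A) (Subring.comap A.subtype (F i.castSucc).toSubring)
        = Subring.map (IsLocalRing.residue ↥A)
            (Subring.comap A.subtype (F i.succ).toSubring)) ↔ D i = 1 := by
    intro i
    have h2 : (EE i.castSucc).toSubring = (EE i.succ).toSubring ↔ EE i.castSucc = EE i.succ := by
      constructor
      · intro h
        ext x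
        exact SetLike.ext_iff.mp h x
      · intro h
        rw [h]
    have h3 : (D i = 1) ↔ EE i.castSucc = EE i.succ := Stmt14Aux.finrank_eq_one_iff_eq (hEEmono i)
    rw [← h3] at h2
    exact h2
  constructor
  · refine ⟨i₀, ?_, ?_⟩
    · exact (hiff i₀).mpr ((hmemiff i₀).mpr rfl)
    · intro i hi
      exact (hmemiff i).mp ((hiff i).mp hi)
  · intro i hne h
    have hDi : D i = p := (hD1p i).resolve_left (fun h1 => hne ((hiff i).mpr h1))
    exact hDi
end
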